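/- Let n be a positive integer, X ∈ 𝒯(n) a triangulation of the punctured n-gon, and a := top(X). Let k < l be integers with 2 ≤ l − k ≤ n such that a'_m < ‖a'‖ for every integer m with k + 1 ≤ m ≤ l − 1. Then the inner arc (k mod n, l − k) belongs to X if and only if both of the following hold: (a) a'_m < a'_k for every integer m with k + 1 ≤ m ≤ l − 1; and (b) there exists an integer s with 1 ≤ s ≤ a_{(l)_n} − δ_l and a'_k = a'_{l−1} + s. (Adachi, Lemma characterizing inner arcs of a triangulation in terms of top(X), part (2) of the lemma preceding the injectivity proposition.) -/

import Mathlib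

/-!
Combinatorial model of admissible arcs and triangulations of a regular
`n`-gon with one puncture (following Adachi, "The classification of
τ-tilting modules over Nakayama algebras").
-/

namespace Punctured

/-- Admissible arcs in a regular `n`-gon with one puncture:
an *inner arc* `inner i t` runs counterclockwise from vertex `i` to vertex
`i + t` (with `2 ≤ t ≤ n` required for admissibility); a *projective arc*
`proj j` runs from the puncture to the vertex `j`. -/
inductive Arc (n : ℕ) : Type
  | inner (i : ZMod n) (t : ℕ) : Arc n
  | proj (j : ZMod n) : Arc n

namespace Arc

/-- The terminal point of an admissible arc. -/
def terminal {n : ℕ} : Arc n → ZMod n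
  | .inner i t => i + (t : ZMod n)
  | .proj j => j

/-- Admissibility: inner arcs must have length `2 ≤ t ≤ n`. -/
def IsAdmissible {n : ℕ} : Arc n → Prop
  | .inner _ t => 2 ≤ t ∧ t ≤ n
  | .proj _ => True

/-- Compatibility (non-crossing) of two admissible arcs, defined via
lifts to `ℤ`. -/
def Compatible {n : ℕ} : Arc n → Arc n → Prop
  | .inner i t, .inner k s =>
      ¬ ∃ x y : ℤ, (x : ZMod n) = i ∧ (y : ZMod n) = k ∧
        ((x < y ∧ y < x + (t : ℤ) ∧ x + (t : ℤ) < y + (s : ℤ)) ∨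
         (y < x ∧ x < y + (s : ℤ) ∧ y + (s : ℤ) < x + (t : ℤ)))
  | .inner i t, .proj j =>
      ¬ ∃ x y : ℤ, (x : ZMod n) = i ∧ (y : ZMod n) = j ∧ x < y ∧ y < x + (t : ℤ)
  | .proj j, .inner i t =>
      ¬ ∃ x y : ℤ, (x : ZMod n) = i ∧ (y : ZMod n) = j ∧ x < y ∧ y < x + (t : ℤ)
  | .proj _, .proj _ => True

end Arc

/-- A set of admissible arcs which is pairwise compatible. -/
def PairwiseCompatible (n : ℕ) (X : Set (Arc n)) : Prop :=
  (∀ a ∈ X, a.IsAdmissible) ∧ ∀ a ∈ X, ∀ b ∈ X, a.Compatible b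

/-- A triangulation of the punctured `n`-gon: a pairwise compatible set of
admissible arcs, maximal under inclusion among such sets. -/
def IsTriangulation (n : ℕ) (X : Set (Arc n)) : Prop :=
  PairwiseCompatible n X ∧
    ∀ Y : Set (Arc n), PairwiseCompatible n Y → X ⊆ Y → Y = X

/-- `top(X)`: for each residue class `c`, the number of arcs of `X` with
terminal point `c`. -/
noncomputable def topSeq (n : ℕ) (X : Set (Arc n)) : ZMod n → ℕ :=
  fun c => {arc ∈ X | Arc.terminal arc = c}.ncard

/-- The representative of `p` modulo `n` lying in `{1, …, n}`. -/
def resRep (n : ℕ) (p : ℤ) : ℕ := ((p - 1) % (n : ℤ)).toNat + 1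

/-- `a'_p := Σ_{j=1}^{(p)_n} (a_j - 1)`, the `n`-periodic extension of the
partial-sum sequence of `a`. -/
def psum (n : ℕ) (a : ZMod n → ℕ) (p : ℤ) : ℤ :=
  ∑ j ∈ Finset.Icc 1 (resRep n p), ((a ((j : ℕ) : ZMod n) : ℤ) - 1)

/-- `‖a'‖ := max {a'_1, …, a'_n}`. -/
noncomputable def pnorm (n : ℕ) (a : ZMod n → ℕ) : ℤ :=
  sSup ((fun i : ℕ => psum n a (i : ℤ)) '' Set.Icc 1 n)

/-- `δ_p = 1` if `a'_p = ‖a'‖` and `δ_p = 0` otherwise. -/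
noncomputable def deltaInt (n : ℕ) (a : ZMod n → ℕ) (p : ℤ) : ℤ :=
  if psum n a p = pnorm n a then 1 else 0

/-- `k_s^j := max {k ∈ ℤ : k < j - 1 and a'_k = a'_{j-1} + s}`. -/
noncomputable def kmax (n : ℕ) (a : ZMod n → ℕ) (j s : ℤ) : ℤ :=
  sSup {k : ℤ | k < j - 1 ∧ psum n a k = psum n a (j - 1) + s}

/-- `ℓ_j(a)`. -/
noncomputable def ellj (n : ℕ) (a : ZMod n → ℕ) (j : ℕ) : ℤ :=
  if (a ((j : ℕ) : ZMod n) : ℤ) - deltaInt n a (j : ℤ) = 0 then 0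
  else (j : ℤ) - kmax n a (j : ℤ) ((a ((j : ℕ) : ZMod n) : ℤ) - deltaInt n a (j : ℤ))



/-- Two chords (intervals) cross. -/
def Cross (c d : ℤ × ℤ) : Prop :=
  (c.1 < d.1 ∧ d.1 < c.2 ∧ c.2 < d.2) ∨ (d.1 < c.1 ∧ c.1 < d.2 ∧ d.2 < c.2)

lemma cross_comm {c d : ℤ × ℤ} (h : Cross c d) : Cross d c := h.elim .inr .inl

private def collapse (v : ℤ) (c : ℤ × ℤ) : ℤ × ℤ :=
  (if v < c.1 then c.1 - 1 else c.1, if v < c.2 then c.2 - 1 else c.2)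

private lemma collapse_fst (v : ℤ) (c : ℤ × ℤ) :
    (collapse v c).1 = if v < c.1 then c.1 - 1 else c.1 := rfl

private lemma collapse_snd (v : ℤ) (c : ℤ × ℤ) :
    (collapse v c).2 = if v < c.2 then c.2 - 1 else c.2 := rfl

/-- Upper bound: a noncrossing family of chords on the path `[L,R]` has at
most `R - L - 1` elements. -/
lemma card_le_noncross : ∀ (N : ℕ) (L R : ℤ), R - L ≤ N → L < R →
    ∀ F : Finset (ℤ × ℤ), (∀ c ∈ F, L ≤ c.1 ∧ c.1 + 2 ≤ c.2 ∧ c.2 ≤ R) →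
    (∀ c ∈ F, ∀ d ∈ F, ¬ Cross c d) → (F.card : ℤ) ≤ R - L - 1 := by
  intro N
  induction N with
  | zero =>
    intro L R hRL hLR F hval _
    rcases F.eq_empty_or_nonempty with rfl | ⟨c, hc⟩
    · simp; omega
    · have := hval c hc; omega
  | succ N ih =>
    intro L R hRL hLR F hval hnc
    rcases F.eq_empty_or_nonempty with rfl | hne
    · simp; omega
    obtain ⟨c₀, hc₀, hmin⟩ := F.exists_min_image (fun c => c.2 - c.1) hne
    have hv₀ := hval c₀ hc₀
    set v : ℤ := c₀.1 + 1 with hv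
    -- no other chord has an endpoint at `v`
    have hnend : ∀ c ∈ F, c ≠ c₀ → c.1 ≠ v ∧ c.2 ≠ v := by
      intro c hc hne'
      have hvc := hval c hc
      have h1 := hnc c hc c₀ hc₀
      have h2 := hnc c₀ hc₀ c hc
      have hm := hmin c hc
      simp only [Cross] at h1 h2
      constructor
      · intro h; omega
      · intro h; omega
    have hne12 : ∀ c ∈ F.erase c₀, c.1 ≠ v ∧ c.2 ≠ v := by
      intro c hc
      exact hnend c (Finset.mem_of_mem_erase hc) (Finset.ne_of_mem_erase hc)
    set F' : Finset (ℤ × ℤ) := (F.erase c₀).image (collapse v) with hF'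
    have hcard' : F'.card = F.card - 1 := by
      rw [hF', Finset.card_image_of_injOn, Finset.card_erase_of_mem hc₀]
      intro c hc d hd hcd
      simp only [Finset.coe_erase, Set.mem_diff, Finset.mem_coe,
        Set.mem_singleton_iff] at hc hd
      have h1 := hne12 c (Finset.mem_erase.2 ⟨hc.2, hc.1⟩)
      have h2 := hne12 d (Finset.mem_erase.2 ⟨hd.2, hd.1⟩)
      have e1 : (collapse v c).1 = (collapse v d).1 := congrArg Prod.fst hcd
      have e2 : (collapse v c).2 = (collapse v d).2 := congrArg Prod.snd hcd
      rw [collapse_fst, collapse_fst] at e1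
      rw [collapse_snd, collapse_snd] at e2
      have : c.1 = d.1 := by split_ifs at e1 <;> omega
      have : c.2 = d.2 := by split_ifs at e2 <;> omega
      exact Prod.ext ‹c.1 = d.1› ‹c.2 = d.2›
    -- validity of F' on [L, R-1]
    have hval' : ∀ c ∈ F', L ≤ c.1 ∧ c.1 + 2 ≤ c.2 ∧ c.2 ≤ R - 1 := by
      intro c hc
      rw [hF', Finset.mem_image] at hc
      obtain ⟨d, hd, rfl⟩ := hc
      have hd' := hne12 d hd
      have hdF := Finset.mem_of_mem_erase hd
      have hdne := Finset.ne_of_mem_erase hd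
      have hvd := hval d hdF
      have h1 := hnc d hdF c₀ hc₀
      have h2 := hnc c₀ hc₀ d hdF
      have hm := hmin d hdF
      have hne' : d.1 ≠ c₀.1 ∨ d.2 ≠ c₀.2 := by
        by_contra h; push_neg at h; exact hdne (Prod.ext h.1 h.2)
      simp only [Cross] at h1 h2
      rw [collapse_fst, collapse_snd]
      split_ifs <;> omega
    have hnc' : ∀ c ∈ F', ∀ d ∈ F', ¬ Cross c d := by
      intro c hc d hd hcd
      rw [hF', Finset.mem_image] at hc hd
      obtain ⟨c', hc', rfl⟩ := hc
      obtain ⟨d', hd', rfl⟩ := hd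
      have h1 := hne12 c' hc'
      have h2 := hne12 d' hd'
      apply hnc c' (Finset.mem_of_mem_erase hc') d' (Finset.mem_of_mem_erase hd')
      simp only [Cross, collapse_fst, collapse_snd] at hcd ⊢
      split_ifs at hcd <;> omega
    have hLR' : L < R - 1 := by
      obtain ⟨c, hc⟩ := hne
      have := hval c hc; omega
    have := ih L (R - 1) (by omega) hLR' F' hval' hnc'
    omega

/-- Version without induction parameter. -/
lemma card_le_noncross' (L R : ℤ) (hLR : L < R)
    (F : Finset (ℤ × ℤ)) (hval : ∀ c ∈ F, L ≤ c.1 ∧ c.1 + 2 ≤ c.2 ∧ c.2 ≤ R)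
    (hnc : ∀ c ∈ F, ∀ d ∈ F, ¬ Cross c d) : (F.card : ℤ) ≤ R - L - 1 :=
  card_le_noncross (R - L).toNat L R (by omega) hLR F hval hnc

/-- Lower bound: a saturated noncrossing family on `[L,R]` containing the
ear `(L,R)` has at least `R - L - 1` elements. -/
lemma card_ge_saturated : ∀ (N : ℕ) (L R : ℤ), R - L ≤ N → L + 2 ≤ R →
    ∀ F : Finset (ℤ × ℤ), (∀ c ∈ F, L ≤ c.1 ∧ c.1 + 2 ≤ c.2 ∧ c.2 ≤ R) →
    (∀ c ∈ F, ∀ d ∈ F, ¬ Cross c d) → (L, R) ∈ F →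
    (∀ c : ℤ × ℤ, L ≤ c.1 → c.1 + 2 ≤ c.2 → c.2 ≤ R →
      (∀ d ∈ F, ¬ Cross c d) → c ∈ F) →
    R - L - 1 ≤ (F.card : ℤ) := by
  intro N
  induction N with
  | zero => intro L R h1 h2; omega
  | succ N ih =>
    intro L R hRL hLR F hval hnc hear hsat
    rcases eq_or_lt_of_le hLR with h2 | h3
    · -- R = L + 2
      have : 0 < F.card := Finset.card_pos.2 ⟨_, hear⟩
      omega
    -- R ≥ L + 3
    classical
    set zs : Finset ℤ := (Finset.Icc (L+1) (R-1)).filter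
      (fun z => z = L + 1 ∨ (L, z) ∈ F) with hzs
    have hzne : zs.Nonempty := ⟨L+1, by simp [hzs]; omega⟩
    set z : ℤ := zs.max' hzne with hz
    have hzmem : z ∈ zs := zs.max'_mem hzne
    have hzIcc : L + 1 ≤ z ∧ z ≤ R - 1 := by
      have := Finset.mem_filter.1 hzmem
      have := Finset.mem_Icc.1 this.1; omega
    have hzor : z = L + 1 ∨ (L, z) ∈ F := (Finset.mem_filter.1 hzmem).2
    have hzmax : ∀ w, (L, w) ∈ F → w ≤ R - 1 → w ≤ z := by
      intro w hw hwR
      apply zs.le_max' w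
      have := hval _ hw
      simp only [hzs, Finset.mem_filter, Finset.mem_Icc]
      exact ⟨by omega, Or.inr hw⟩
    -- key: every chord is the ear, or lies in [L,z], or in [z,R]
    have hsplit : ∀ c ∈ F, c = (L, R) ∨ c.2 ≤ z ∨ z ≤ c.1 := by
      intro c hc
      by_contra h
      push_neg at h
      obtain ⟨hcne, hcz1, hcz2⟩ := h
      have hvc := hval c hc
      -- c.1 < z < c.2
      have hc1 : c.1 = L := by
        rcases hzor with h1 | h1
        · omega
        · have := hnc _ h1 c hc
          have := hnc c hc _ h1
          simp only [Cross] at *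
          omega
      -- then c = (L, c.2) with z < c.2, contradicting maximality or ear
      have hc2 : c.2 ≤ R - 1 := by
        rcases eq_or_lt_of_le hvc.2.2 with h | h
        · exfalso; apply hcne; rw [← hc1, ← h]
        · omega
      have : c.2 ≤ z := hzmax c.2 (by rw [← hc1]; exact hc) hc2
      omega
    -- (z, R) ∈ F when z ≤ R - 2
    have hzR : z ≤ R - 2 → (z, R) ∈ F := by
      intro hzR2
      apply hsat (z, R) (by omega) (by omega) (by omega)
      intro d hd hcross
      have hvd := hval d hd
      rcases hsplit d hd with rfl | h | h
      · simp only [Cross] at hcross; omega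
      · simp only [Cross] at hcross
        -- pattern: d.1 < z < d.2 < R with d.2 ≤ z impossible; other pattern impossible
        omega
      · simp only [Cross] at hcross; omega
    set F₁ : Finset (ℤ × ℤ) := F.filter (fun c => c.2 ≤ z) with hF₁
    set F₂ : Finset (ℤ × ℤ) := F.filter (fun c => z ≤ c.1) with hF₂
    have hsub : insert (L, R) (F₁ ∪ F₂) ⊆ F := by
      intro c hc
      rcases Finset.mem_insert.1 hc with rfl | hc
      · exact hear
      · rcases Finset.mem_union.1 hc with hc | hc
        · exact (Finset.mem_filter.1 hc).1
        · exact (Finset.mem_filter.1 hc).1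
    have hearnot : (L, R) ∉ F₁ ∪ F₂ := by
      intro h
      rcases Finset.mem_union.1 h with h | h <;>
        · have := Finset.mem_filter.1 h; simp at this; omega
    have hdisj : Disjoint F₁ F₂ := by
      rw [Finset.disjoint_left]
      intro c h1 h2
      have := (Finset.mem_filter.1 h1).2
      have := (Finset.mem_filter.1 h2).2
      have := hval c (Finset.mem_filter.1 h1).1
      omega
    have hcards : F₁.card + F₂.card + 1 ≤ F.card := by
      have := Finset.card_le_card hsub
      rw [Finset.card_insert_of_notMem hearnot, Finset.card_union_of_disjoint hdisj] at this
      omega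
    -- bound F₁ from below
    have hb₁ : z - L - 1 ≤ (F₁.card : ℤ) := by
      rcases eq_or_lt_of_le hzIcc.1 with h | h
      · simp; omega
      · -- z ≥ L + 2, so (L,z) ∈ F
        have hLz : (L, z) ∈ F := by rcases hzor with h' | h'; omega; exact h'
        apply ih L z (by omega) (by omega)
        · intro c hc
          have := Finset.mem_filter.1 hc
          have := hval c this.1
          have := this.2.2  -- dummy
          have h2 := (Finset.mem_filter.1 hc).2
          have h3 := hval c (Finset.mem_filter.1 hc).1
          omega
        · intro c hc d hd
          exact hnc c (Finset.mem_filter.1 hc).1 d (Finset.mem_filter.1 hd).1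
        · exact Finset.mem_filter.2 ⟨hLz, le_refl z⟩
        · -- saturation of F₁
          intro c hc1 hc2 hc3 hncF
          have hcF : c ∈ F := by
            apply hsat c hc1 hc2 (by omega)
            intro d hd hcross
            rcases hsplit d hd with rfl | h | h
            · simp only [Cross] at hcross; omega
            · exact hncF d (Finset.mem_filter.2 ⟨hd, h⟩) hcross
            · have := hval d hd
              simp only [Cross] at hcross; omega
          exact Finset.mem_filter.2 ⟨hcF, by omega⟩
    have hb₂ : R - z - 1 ≤ (F₂.card : ℤ) := by
      rcases eq_or_lt_of_le hzIcc.2 with h | h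
      · simp; omega
      · have hzR2 : z ≤ R - 2 := by omega
        have hzRF := hzR hzR2
        apply ih z R (by omega) (by omega)
        · intro c hc
          have h2 := (Finset.mem_filter.1 hc).2
          have h3 := hval c (Finset.mem_filter.1 hc).1
          omega
        · intro c hc d hd
          exact hnc c (Finset.mem_filter.1 hc).1 d (Finset.mem_filter.1 hd).1
        · exact Finset.mem_filter.2 ⟨hzRF, le_refl z⟩
        · intro c hc1 hc2 hc3 hncF
          have hcF : c ∈ F := by
            apply hsat c (by omega) hc2 hc3
            intro d hd hcross
            rcases hsplit d hd with rfl | h | h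
            · simp only [Cross] at hcross; omega
            · have := hval d hd
              simp only [Cross] at hcross; omega
            · exact hncF d (Finset.mem_filter.2 ⟨hd, h⟩) hcross
          exact Finset.mem_filter.2 ⟨hcF, by omega⟩
    omega

lemma card_ge_saturated' (L R : ℤ) (hLR : L + 2 ≤ R)
    (F : Finset (ℤ × ℤ)) (hval : ∀ c ∈ F, L ≤ c.1 ∧ c.1 + 2 ≤ c.2 ∧ c.2 ≤ R)
    (hnc : ∀ c ∈ F, ∀ d ∈ F, ¬ Cross c d) (hear : (L, R) ∈ F)
    (hsat : ∀ c : ℤ × ℤ, L ≤ c.1 → c.1 + 2 ≤ c.2 → c.2 ≤ R →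
      (∀ d ∈ F, ¬ Cross c d) → c ∈ F) :
    R - L - 1 ≤ (F.card : ℤ) :=
  card_ge_saturated (R - L).toNat L R (by omega) hLR F hval hnc hear hsat


section Glue
variable {n : ℕ} (hn : 0 < n)

lemma intCast_eq_iff_dvd (x y : ℤ) :
    ((x : ZMod n) = (y : ZMod n)) ↔ (n : ℤ) ∣ x - y := by
  constructor
  · intro h
    have : ((x - y : ℤ) : ZMod n) = 0 := by push_cast; rw [h]; ring
    exact (ZMod.intCast_zmod_eq_zero_iff_dvd _ _).1 this
  · intro h
    have : ((x - y : ℤ) : ZMod n) = 0 := (ZMod.intCast_zmod_eq_zero_iff_dvd _ _).2 h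
    have h2 : ((x : ZMod n) - y) = 0 := by push_cast at this; linear_combination this
    linear_combination h2

include hn in
lemma eq_of_cast_eq_window {x y : ℤ} (h : (x : ZMod n) = (y : ZMod n))
    (hw1 : -(n : ℤ) < x - y) (hw2 : x - y < n) : x = y := by
  have hd := (intCast_eq_iff_dvd x y).1 h
  have := Int.eq_zero_of_abs_lt_dvd hd (abs_lt.2 ⟨hw1, hw2⟩)
  omega

include hn in
lemma exists_rep (p : ZMod n) (L : ℤ) :
    ∃ j : ℤ, L ≤ j ∧ j < L + n ∧ (j : ZMod n) = p := by
  haveI : NeZero n := ⟨hn.ne'⟩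
  refine ⟨L + ((p - (L : ZMod n)).val : ℤ), by omega, ?_, ?_⟩
  · have := ZMod.val_lt (p - (L : ZMod n)); omega
  · push_cast
    rw [ZMod.natCast_val, ZMod.cast_id]
    ring

end Glue

namespace Arc
variable {n : ℕ}

lemma compat_symm {a b : Arc n} (h : Compatible a b) : Compatible b a := by
  cases a with
  | inner i t =>
    cases b with
    | inner k s =>
      intro ⟨x, y, hx, hy, hp⟩
      exact h ⟨y, x, hy, hx, hp.symm⟩
    | proj j => exact h
  | proj j =>
    cases b with
    | inner i t => exact h
    | proj j' => trivial

lemma self_compat (hn : 0 < n) {a : Arc n} (ha : a.IsAdmissible) :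
    Compatible a a := by
  cases a with
  | inner i t =>
    intro ⟨x, y, hx, hy, hp⟩
    obtain ⟨htl, htn⟩ := ha
    have hxy : (x : ZMod n) = (y : ZMod n) := hx.trans hy.symm
    have := (intCast_eq_iff_dvd x y).1 hxy
    have habs : x - y = 0 ∨ (n : ℤ) ≤ |x - y| := by
      rcases eq_or_ne (x - y) 0 with h | h
      · exact Or.inl h
      · exact Or.inr (Int.le_of_dvd (abs_pos.2 h) ((dvd_abs _ _).2 this))
    have habs2 := abs_cases (x - y)
    rcases habs with h | h <;> rcases hp with hp | hp <;> omega
  | proj j => trivial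

end Arc

section Mem
variable {n : ℕ} (hn : 0 < n) {X : Set (Arc n)} (hX : IsTriangulation n X)

include hn hX in
lemma mem_iff_compat {a : Arc n} (ha : a.IsAdmissible) :
    a ∈ X ↔ ∀ b ∈ X, a.Compatible b := by
  constructor
  · intro haX b hb
    exact hX.1.2 a haX b hb
  · intro hcomp
    have hpc : PairwiseCompatible n (insert a X) := by
      constructor
      · rintro b (rfl | hb)
        · exact ha
        · exact hX.1.1 b hb
      · rintro b (rfl | hb) c (rfl | hc)
        · exact Arc.self_compat hn ha
        · exact hcomp c hc
        · exact Arc.compat_symm (hcomp b hb)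
        · exact hX.1.2 b hb c hc
    have := hX.2 _ hpc (Set.subset_insert a X)
    rw [← this]
    exact Set.mem_insert a X

include hn hX in
lemma X_finite : X.Finite := by
  haveI : NeZero n := ⟨hn.ne'⟩
  classical
  have : X ⊆ Set.range (fun z : (ZMod n × Fin (n+1)) ⊕ ZMod n =>
      match z with
      | .inl (i, t) => Arc.inner i (t : ℕ)
      | .inr j => Arc.proj j) := by
    intro a haX
    cases a with
    | inner i t =>
      have := hX.1.1 _ haX
      obtain ⟨h1, h2⟩ := this
      exact ⟨.inl (i, ⟨t, by omega⟩), rfl⟩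
    | proj j => exact ⟨.inr j, rfl⟩
  exact Set.Finite.subset (Set.finite_range _) this

end Mem

section Proj
variable {n : ℕ} (hn : 0 < n) {X : Set (Arc n)} (hX : IsTriangulation n X)

include hn hX in
lemma exists_proj : ∃ j : ZMod n, Arc.proj j ∈ X := by
  classical
  by_contra hno
  push_neg at hno
  -- helper: a projective arc is admissible
  have hadm : ∀ j : ZMod n, (Arc.proj j : Arc n).IsAdmissible := fun _ => trivial
  -- X is nonempty
  have hXne : X.Nonempty := by
    rcases X.eq_empty_or_nonempty with rfl | h
    · exfalso
      apply hno 0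
      rw [mem_iff_compat hn hX (hadm 0)]
      intro b hb
      exact absurd hb (Set.notMem_empty b)
    · exact h
  -- pick an inner arc of maximal length
  have hfin := X_finite hn hX
  set Xf := hfin.toFinset with hXf
  have hXfne : Xf.Nonempty := by
    rwa [hXf, Set.Finite.toFinset_nonempty]
  set len : Arc n → ℕ := fun a => match a with
    | .inner _ t => t
    | .proj _ => 0 with hlen
  obtain ⟨β, hβ, hβmax⟩ := Xf.exists_max_image len hXfne
  have hβX : β ∈ X := hfin.mem_toFinset.1 hβ
  obtain ⟨i, t⟩ := β
  case proj => exact hno _ hβX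
  -- now β = inner i t has max length; claim proj i is compatible with everything
  have hadmβ := hX.1.1 _ hβX
  apply hno i
  rw [mem_iff_compat hn hX (hadm i)]
  intro b hb
  cases b with
  | proj j => exact absurd hb (hno j)
  | inner u s =>
    -- Compatible (proj i) (inner u s)
    intro ⟨x, y, hxu, hyi, h1, h2⟩
    have hadmb := hX.1.1 _ hb
    obtain ⟨hs2, hsn⟩ := hadmb
    have hcomp := hX.1.2 _ hb _ hβX
    -- instantiate compatibility of (inner u s) and (inner i t) at lifts x, y
    have hkey : ¬ (x < y ∧ y < x + (s : ℤ) ∧ x + (s : ℤ) < y + (t : ℤ)) := by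
      intro hpat
      exact hcomp ⟨x, y, hxu, hyi, Or.inl hpat⟩
    have hst : s ≤ t := hβmax _ (hfin.mem_toFinset.2 hb)
    omega

end Proj
section Chords

variable {n : ℕ}

/-- auxiliary: possible shifts between two pairs of lifts -/
lemma shift_cases (hn : 0 < n) {x y x' y' : ℤ} (hx : (x' : ZMod n) = (x : ZMod n))
    (hy : (y' : ZMod n) = (y : ZMod n)) :
    (y' - x') - (y - x) = 0 ∨ (n : ℤ) ≤ (y' - x') - (y - x) ∨
      (y' - x') - (y - x) ≤ -(n : ℤ) := by
  have h1 := (intCast_eq_iff_dvd x' x).1 hx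
  have h2 := (intCast_eq_iff_dvd y' y).1 hy
  have hdvd : (n : ℤ) ∣ (y' - x') - (y - x) := by
    have := dvd_sub h2 h1
    rw [show y' - x' - (y - x) = y' - y - (x' - x) by ring]; exact this
  rcases eq_or_ne ((y' - x') - (y - x)) 0 with h | h
  · exact Or.inl h
  · have h3 := Int.le_of_dvd (abs_pos.2 h) ((dvd_abs _ _).2 hdvd)
    have h4 := abs_cases ((y' - x') - (y - x))
    omega

/-- The arc corresponding to a chord on the path `[J, J+n+1]`. -/
def ArcOf (n : ℕ) (J : ℤ) (c : ℤ × ℤ) : Arc n :=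
  if c.2 = J + (n : ℤ) + 1 then Arc.proj ((c.1 : ℤ) : ZMod n)
  else Arc.inner ((c.1 : ℤ) : ZMod n) (c.2 - c.1).toNat

/-- chord predicate -/
def TP (n : ℕ) (X : Set (Arc n)) (J : ℤ) (c : ℤ × ℤ) : Prop :=
  J ≤ c.1 ∧ c.1 + 2 ≤ c.2 ∧ c.2 ≤ J + (n : ℤ) + 1 ∧ ArcOf n J c ∈ X

/-- the chord diagram of a triangulation, as a finset -/
noncomputable def TF (n : ℕ) (X : Set (Arc n)) (J : ℤ) : Finset (ℤ × ℤ) :=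
  @Finset.filter _ (TP n X J) (Classical.decPred _)
    ((Finset.Icc J (J + (n : ℤ))) ×ˢ (Finset.Icc J (J + (n : ℤ) + 1)))

lemma mem_TF {X : Set (Arc n)} {J : ℤ} {c : ℤ × ℤ} :
    c ∈ TF n X J ↔ TP n X J c := by
  classical
  simp only [TF, Finset.mem_filter]
  constructor
  · exact fun h => h.2
  · intro h
    refine ⟨?_, h⟩
    rw [Finset.mem_product, Finset.mem_Icc, Finset.mem_Icc]
    obtain ⟨h1, h2, h3, _⟩ := h
    omega

variable (hn : 0 < n) {X : Set (Arc n)} (hX : IsTriangulation n X) {J : ℤ}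
  (hJ : Arc.proj ((J : ℤ) : ZMod n) ∈ X)

lemma cast_JN : ((J + (n : ℤ) : ℤ) : ZMod n) = ((J : ℤ) : ZMod n) := by
  push_cast
  rw [ZMod.natCast_self]
  ring

include hX hJ in
lemma inner_lift {i : ZMod n} {t : ℕ} (hadm : 2 ≤ t ∧ t ≤ n)
    (hmem : Arc.inner i t ∈ X) :
    ∃ x : ℤ, J ≤ x ∧ x < J + n ∧ (x : ZMod n) = i ∧ x + t ≤ J + n := by
  have hn : 0 < n := by omega
  obtain ⟨x, hx1, hx2, hx3⟩ := exists_rep hn i J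
  refine ⟨x, hx1, hx2, hx3, ?_⟩
  by_contra h
  push_neg at h
  have hcomp := hX.1.2 _ hmem _ hJ
  exact hcomp ⟨x, J + n, hx3, cast_JN, by omega, by omega⟩

include hX hJ in
lemma mem_TF_inner {x y : ℤ} (hx : J ≤ x) (hy : x + 2 ≤ y) (hyn : y ≤ J + n) :
    ((x, y) ∈ TF n X J ↔ Arc.inner ((x : ℤ) : ZMod n) (y - x).toNat ∈ X) := by
  rw [mem_TF]
  unfold TP ArcOf
  simp only
  rw [if_neg (by omega)]
  constructor
  · exact fun h => h.2.2.2
  · intro h; exact ⟨hx, hy, by omega, h⟩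

include hX hJ in
lemma mem_TF_proj {x : ℤ} (hx : J ≤ x) (hxn : x ≤ J + n - 1) :
    ((x, J + (n : ℤ) + 1) ∈ TF n X J ↔ Arc.proj ((x : ℤ) : ZMod n) ∈ X) := by
  rw [mem_TF]
  unfold TP ArcOf
  simp only
  rw [if_pos trivial]
  constructor
  · exact fun h => h.2.2.2
  · intro h; exact ⟨hx, by omega, by omega, h⟩

include hn hX hJ in
lemma ear_mem : ((J : ℤ), J + (n : ℤ) + 1) ∈ TF n X J := by
  rw [mem_TF_proj hX hJ (le_refl J) (by omega)]
  exact hJ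

include hn hX hJ in
lemma TF_noncross : ∀ c ∈ TF n X J, ∀ d ∈ TF n X J, ¬ Cross c d := by
  intro c hc d hd hcross
  obtain ⟨hc1, hc2, hc3, hc4⟩ := mem_TF.1 hc
  obtain ⟨hd1, hd2, hd3, hd4⟩ := mem_TF.1 hd
  by_cases hcP : c.2 = J + (n : ℤ) + 1 <;> by_cases hdP : d.2 = J + (n : ℤ) + 1
  · simp only [Cross] at hcross; omega
  · -- c fan, d inner
    unfold ArcOf at hc4 hd4
    rw [if_pos hcP] at hc4
    rw [if_neg hdP] at hd4
    have hcomp := hX.1.2 _ hc4 _ hd4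
    have ht : ((d.2 - d.1).toNat : ℤ) = d.2 - d.1 := Int.toNat_of_nonneg (by omega)
    apply hcomp
    refine ⟨d.1, c.1, rfl, rfl, ?_, ?_⟩
    · simp only [Cross] at hcross; omega
    · simp only [Cross] at hcross; omega
  · -- c inner, d fan
    unfold ArcOf at hc4 hd4
    rw [if_neg hcP] at hc4
    rw [if_pos hdP] at hd4
    have hcomp := hX.1.2 _ hc4 _ hd4
    have ht : ((c.2 - c.1).toNat : ℤ) = c.2 - c.1 := Int.toNat_of_nonneg (by omega)
    apply hcomp
    refine ⟨c.1, d.1, rfl, rfl, ?_, ?_⟩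
    · simp only [Cross] at hcross; omega
    · simp only [Cross] at hcross; omega
  · -- both inner
    unfold ArcOf at hc4 hd4
    rw [if_neg hcP] at hc4
    rw [if_neg hdP] at hd4
    have hcomp := hX.1.2 _ hc4 _ hd4
    have ht : ((c.2 - c.1).toNat : ℤ) = c.2 - c.1 := Int.toNat_of_nonneg (by omega)
    have hs : ((d.2 - d.1).toNat : ℤ) = d.2 - d.1 := Int.toNat_of_nonneg (by omega)
    apply hcomp
    refine ⟨c.1, d.1, rfl, rfl, ?_⟩
    simp only [Cross] at hcross
    rcases hcross with h | h
    · exact Or.inl (by omega)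
    · exact Or.inr (by omega)

end Chords
section Sat
variable {n : ℕ} (hn : 0 < n) {X : Set (Arc n)} (hX : IsTriangulation n X) {J : ℤ}
  (hJ : Arc.proj ((J : ℤ) : ZMod n) ∈ X)

include hn hX hJ in
lemma chord_of_inner {u : ZMod n} {s : ℕ} (hb : Arc.inner u s ∈ X) :
    ∃ x : ℤ, J ≤ x ∧ x + s ≤ J + n ∧ (x : ZMod n) = u ∧ (x, x + (s : ℤ)) ∈ TF n X J := by
  have hadm := hX.1.1 _ hb
  obtain ⟨x, hx1, hx2, hx3, hx4⟩ := inner_lift hX hJ hadm hb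
  have hs2 : (2 : ℤ) ≤ (s : ℤ) := by exact_mod_cast hadm.1
  refine ⟨x, hx1, hx4, hx3, ?_⟩
  rw [mem_TF_inner hX hJ hx1 (by omega) (by omega)]
  have h1 : (x + (s : ℤ) - x).toNat = s := by omega
  rw [h1, hx3]
  exact hb

include hn hX hJ in
lemma TF_sat : ∀ c : ℤ × ℤ, J ≤ c.1 → c.1 + 2 ≤ c.2 → c.2 ≤ J + (n : ℤ) + 1 →
    (∀ d ∈ TF n X J, ¬ Cross c d) → c ∈ TF n X J := by
  intro c h1 h2 h3 hnc
  by_cases hcP : c.2 = J + (n : ℤ) + 1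
  · -- projective candidate
    have hmem : Arc.proj ((c.1 : ℤ) : ZMod n) ∈ X := by
      rw [mem_iff_compat hn hX (show (Arc.proj ((c.1 : ℤ) : ZMod n)).IsAdmissible from trivial)]
      intro b hb
      cases b with
      | proj j => trivial
      | inner u s =>
        obtain ⟨x, hx1, hx2, hx3, hd⟩ := chord_of_inner hn hX hJ hb
        have hadm := hX.1.1 _ hb
        have hs2 : (2 : ℤ) ≤ (s : ℤ) := by exact_mod_cast hadm.1
        have hncd := hnc _ hd
        rintro ⟨x', y', hx', hy', hp1, hp2⟩
        have hw := shift_cases hn (hx'.trans hx3.symm) (hy' : (y' : ZMod n) = ((c.1 : ℤ) : ZMod n))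
        simp only [Cross] at hncd
        omega
    rw [mem_TF]
    refine ⟨h1, h2, h3, ?_⟩
    unfold ArcOf
    rw [if_pos hcP]
    exact hmem
  · -- inner candidate
    have hc2n : c.2 ≤ J + (n : ℤ) := by omega
    have tdef : (((c.2 - c.1).toNat : ℕ) : ℤ) = c.2 - c.1 := Int.toNat_of_nonneg (by omega)
    have hadmc : (Arc.inner ((c.1 : ℤ) : ZMod n) (c.2 - c.1).toNat).IsAdmissible := by
      constructor <;> omega
    have hmem : Arc.inner ((c.1 : ℤ) : ZMod n) (c.2 - c.1).toNat ∈ X := by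
      rw [mem_iff_compat hn hX hadmc]
      intro b hb
      cases b with
      | inner u s =>
        obtain ⟨x, hx1, hx2, hx3, hd⟩ := chord_of_inner hn hX hJ hb
        have hadm := hX.1.1 _ hb
        have hs2 : (2 : ℤ) ≤ (s : ℤ) := by exact_mod_cast hadm.1
        have hsn : (s : ℤ) ≤ (n : ℤ) := by exact_mod_cast hadm.2
        have hncd := hnc _ hd
        rintro ⟨x', y', hx', hy', hp⟩
        have hw := shift_cases hn (hx' : (x' : ZMod n) = ((c.1 : ℤ) : ZMod n))
          (hy'.trans hx3.symm)
        simp only [Cross] at hncd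
        rcases hp with hp | hp <;> omega
      | proj j =>
        obtain ⟨y₀, hy1, hy2, hy3⟩ := exists_rep hn j (J + 1)
        rintro ⟨x', y', hx', hy', hp1, hp2⟩
        have hw := shift_cases hn (hx' : (x' : ZMod n) = ((c.1 : ℤ) : ZMod n))
          (hy'.trans hy3.symm)
        by_cases hyJ : y₀ = J + (n : ℤ)
        · omega
        · have hd : (y₀, J + (n : ℤ) + 1) ∈ TF n X J := by
            rw [mem_TF_proj hX hJ (by omega) (by omega), hy3]
            exact hb
          have hncd := hnc _ hd
          simp only [Cross] at hncd
          omega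
    rw [mem_TF]
    refine ⟨h1, h2, h3, ?_⟩
    unfold ArcOf
    rw [if_neg hcP]
    exact hmem

end Sat
section Count
variable {n : ℕ} (hn : 0 < n) {X : Set (Arc n)} (hX : IsTriangulation n X) {J : ℤ}
  (hJ : Arc.proj ((J : ℤ) : ZMod n) ∈ X)

lemma ArcOf_proj {c : ℤ × ℤ} (h : c.2 = J + (n : ℤ) + 1) :
    ArcOf n J c = Arc.proj ((c.1 : ℤ) : ZMod n) := by unfold ArcOf; rw [if_pos h]

lemma ArcOf_inner {c : ℤ × ℤ} (h : c.2 ≠ J + (n : ℤ) + 1) :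
    ArcOf n J c = Arc.inner ((c.1 : ℤ) : ZMod n) (c.2 - c.1).toNat := by
  unfold ArcOf; rw [if_neg h]

include hn hX hJ in
lemma card_TF_eq : ((TF n X J).card : ℤ) = n := by
  have hle := card_le_noncross' J (J + n + 1) (by omega) (TF n X J)
    (fun c hc => by have := mem_TF.1 hc; exact ⟨this.1, this.2.1, this.2.2.1⟩)
    (TF_noncross hn hX hJ)
  have hge := card_ge_saturated' J (J + n + 1) (by omega) (TF n X J)
    (fun c hc => by have := mem_TF.1 hc; exact ⟨this.1, this.2.1, this.2.2.1⟩)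
    (TF_noncross hn hX hJ) (ear_mem hn hX hJ) (TF_sat hn hX hJ)
  omega

include hn hX in
lemma topSeq_eq (c : ZMod n) :
    topSeq n X c = ((X_finite hn hX).toFinset.filter (fun a => a.terminal = c)).card := by
  classical
  unfold topSeq
  rw [← Set.ncard_coe_finset]
  congr 1
  ext a
  simp [Set.Finite.mem_toFinset]

include hn hX hJ in
lemma card_X_eq : (((X_finite hn hX).toFinset.card : ℤ)) = n := by
  classical
  rw [← card_TF_eq hn hX hJ]
  norm_cast
  apply (Finset.card_bij (fun (c : ℤ × ℤ) (_ : c ∈ TF n X J) => ArcOf n J c) ?_ ?_ ?_).symm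
  · intro c hc
    exact (X_finite hn hX).mem_toFinset.2 (mem_TF.1 hc).2.2.2
  · intro c hc d hd h
    obtain ⟨hc1, hc2, hc3, _⟩ := mem_TF.1 hc
    obtain ⟨hd1, hd2, hd3, _⟩ := mem_TF.1 hd
    by_cases hcP : c.2 = J + (n : ℤ) + 1 <;> by_cases hdP : d.2 = J + (n : ℤ) + 1
    · rw [ArcOf_proj hcP, ArcOf_proj hdP] at h
      simp only [Arc.proj.injEq] at h
      have := eq_of_cast_eq_window hn h (by omega) (by omega)
      exact Prod.ext this (by omega)
    · rw [ArcOf_proj hcP, ArcOf_inner hdP] at h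
      exact absurd h (by simp)
    · rw [ArcOf_inner hcP, ArcOf_proj hdP] at h
      exact absurd h (by simp)
    · rw [ArcOf_inner hcP, ArcOf_inner hdP] at h
      simp only [Arc.inner.injEq] at h
      have h1 := eq_of_cast_eq_window hn h.1 (by omega) (by omega)
      have h2 := h.2
      exact Prod.ext h1 (by omega)
  · intro a ha
    have haX := (X_finite hn hX).mem_toFinset.1 ha
    cases a with
    | inner u s =>
      obtain ⟨x, hx1, hx2, hx3, hd⟩ := chord_of_inner hn hX hJ haX
      refine ⟨(x, x + (s : ℤ)), hd, ?_⟩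
      show ArcOf n J (x, x + (s : ℤ)) = Arc.inner u s
      rw [ArcOf_inner (by dsimp only; omega)]
      have h1 : ((x + (s : ℤ) - x).toNat) = s := by omega
      simp only
      rw [h1, hx3]
    | proj j =>
      obtain ⟨y₀, hy1, hy2, hy3⟩ := exists_rep hn j J
      refine ⟨(y₀, J + (n : ℤ) + 1), ?_, ?_⟩
      · rw [mem_TF_proj hX hJ hy1 (by omega), hy3]
        exact haX
      · show ArcOf n J (y₀, J + (n : ℤ) + 1) = Arc.proj j
        rw [ArcOf_proj rfl]
        simp only
        rw [hy3]

end Count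
section CountEq
variable {n : ℕ} (hn : 0 < n) {X : Set (Arc n)} (hX : IsTriangulation n X) {J : ℤ}
  (hJ : Arc.proj ((J : ℤ) : ZMod n) ∈ X)

def isInnerArc : Arc n → Prop := fun a => match a with
  | .inner _ _ => True
  | .proj _ => False

lemma terminal_proj (j : ZMod n) : (Arc.proj j).terminal = j := rfl

lemma terminal_inner (i : ZMod n) (t : ℕ) :
    (Arc.inner i t).terminal = i + (t : ZMod n) := rfl

include hn hX hJ in
lemma count_eq (p : ℤ) (hp1 : J < p) (hp2 : p ≤ J + (n : ℤ)) :
    ((topSeq n X ((p : ℤ) : ZMod n)) : ℤ) =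
      ((TF n X J).filter (fun c => c.2 = p)).card
      + ((TF n X J).filter (fun c => c.1 = p ∧ c.2 = J + (n : ℤ) + 1)).card
      + (if p = J + (n : ℤ) then 1 else 0) := by
  classical
  rw [topSeq_eq hn hX]
  set Xf := (X_finite hn hX).toFinset with hXf
  have hsplit := Finset.card_filter_add_card_filter_not
    (s := Xf.filter (fun a => a.terminal = ((p : ℤ) : ZMod n))) (p := isInnerArc)
  rw [Finset.filter_filter, Finset.filter_filter] at hsplit
  -- inner part
  have hinner : (Xf.filter (fun a => a.terminal = ((p : ℤ) : ZMod n) ∧ isInnerArc a)).card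
      = ((TF n X J).filter (fun c => c.2 = p)).card := by
    apply (Finset.card_bij (fun (c : ℤ × ℤ) (_ : c ∈ (TF n X J).filter (fun c => c.2 = p))
      => ArcOf n J c) ?_ ?_ ?_).symm
    · intro c hc
      obtain ⟨hcT, hcp⟩ := Finset.mem_filter.1 hc
      obtain ⟨hc1, hc2, hc3, hc4⟩ := mem_TF.1 hcT
      have hcP : c.2 ≠ J + (n : ℤ) + 1 := by omega
      rw [Finset.mem_filter]
      refine ⟨(X_finite hn hX).mem_toFinset.2 hc4, ?_, ?_⟩
      · rw [ArcOf_inner hcP, terminal_inner]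
        have ht : (((c.2 - c.1).toNat : ℕ) : ZMod n) = ((c.2 - c.1 : ℤ) : ZMod n) := by
          rw [← Int.cast_natCast]
          congr 1
          omega
        rw [ht, ← hcp]
        push_cast
        ring
      · rw [ArcOf_inner hcP]
        trivial
    · intro c hc d hd h
      try dsimp only at h
      obtain ⟨hcT, hcp⟩ := Finset.mem_filter.1 hc
      obtain ⟨hdT, hdp⟩ := Finset.mem_filter.1 hd
      obtain ⟨hc1, hc2, hc3, _⟩ := mem_TF.1 hcT
      obtain ⟨hd1, hd2, hd3, _⟩ := mem_TF.1 hdT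
      rw [ArcOf_inner (by omega), ArcOf_inner (by omega)] at h
      simp only [Arc.inner.injEq] at h
      have h1 := eq_of_cast_eq_window hn h.1 (by omega) (by omega)
      have h2 := h.2
      exact Prod.ext h1 (by omega)
    · intro a ha
      obtain ⟨haf, hat, hai⟩ := Finset.mem_filter.1 ha
      have haX := (X_finite hn hX).mem_toFinset.1 haf
      cases a with
      | proj j => exact absurd hai (by intro h; exact h)
      | inner u s =>
        obtain ⟨x, hx1, hx2, hx3, hd⟩ := chord_of_inner hn hX hJ haX
        have hadm := hX.1.1 _ haX
        have hs2 : (2 : ℤ) ≤ (s : ℤ) := by exact_mod_cast hadm.1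
        have hterm : ((x + (s : ℤ) : ℤ) : ZMod n) = ((p : ℤ) : ZMod n) := by
          push_cast
          rw [hx3]
          exact hat
        have hxp : x + (s : ℤ) = p := eq_of_cast_eq_window hn hterm (by omega) (by omega)
        refine ⟨(x, x + (s : ℤ)), Finset.mem_filter.2 ⟨hd, hxp⟩, ?_⟩
        show ArcOf n J (x, x + (s : ℤ)) = Arc.inner u s
        rw [ArcOf_inner (by dsimp only; omega)]
        have h1 : ((x + (s : ℤ) - x).toNat) = s := by omega
        simp only
        rw [h1, hx3]
  -- projective part
  have hproj : (Xf.filter (fun a => a.terminal = ((p : ℤ) : ZMod n) ∧ ¬ isInnerArc a)).card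
      = ((TF n X J).filter (fun c => c.1 = p ∧ c.2 = J + (n : ℤ) + 1)).card
        + (if p = J + (n : ℤ) then 1 else 0) := by
    by_cases hpJ : p = J + (n : ℤ)
    · rw [if_pos hpJ]
      have hempty : ((TF n X J).filter (fun c => c.1 = p ∧ c.2 = J + (n : ℤ) + 1)) = ∅ := by
        rw [Finset.eq_empty_iff_forall_notMem]
        intro c hc
        obtain ⟨hcT, hcp⟩ := Finset.mem_filter.1 hc
        obtain ⟨hc1, hc2, hc3, _⟩ := mem_TF.1 hcT
        omega
      rw [hempty, Finset.card_empty]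
      have hone : (Xf.filter (fun a => a.terminal = ((p : ℤ) : ZMod n) ∧ ¬ isInnerArc a))
          = {Arc.proj ((J : ℤ) : ZMod n)} := by
        ext a
        rw [Finset.mem_filter, Finset.mem_singleton]
        constructor
        · rintro ⟨haf, hat, hai⟩
          cases a with
          | inner u s => exact absurd trivial hai
          | proj j =>
            congr 1
            have hj : j = ((p : ℤ) : ZMod n) := hat
            rw [hj, hpJ, cast_JN]
        · rintro rfl
          refine ⟨(X_finite hn hX).mem_toFinset.2 hJ, ?_, fun h => h⟩
          rw [terminal_proj, hpJ, cast_JN]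
      rw [hone, Finset.card_singleton]
    · rw [if_neg hpJ]
      by_cases hpX : Arc.proj ((p : ℤ) : ZMod n) ∈ X
      · have h1 : (Xf.filter (fun a => a.terminal = ((p : ℤ) : ZMod n) ∧ ¬ isInnerArc a))
            = {Arc.proj ((p : ℤ) : ZMod n)} := by
          ext a
          rw [Finset.mem_filter, Finset.mem_singleton]
          constructor
          · rintro ⟨haf, hat, hai⟩
            cases a with
            | inner u s => exact absurd trivial hai
            | proj j => exact congrArg Arc.proj hat
          · rintro rfl
            exact ⟨(X_finite hn hX).mem_toFinset.2 hpX, rfl, fun h => h⟩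
        have h2 : ((TF n X J).filter (fun c => c.1 = p ∧ c.2 = J + (n : ℤ) + 1))
            = {(p, J + (n : ℤ) + 1)} := by
          ext c
          rw [Finset.mem_filter, Finset.mem_singleton]
          constructor
          · rintro ⟨hcT, hcp, hcP⟩
            exact Prod.ext hcp hcP
          · rintro rfl
            refine ⟨?_, rfl, rfl⟩
            rw [mem_TF_proj hX hJ (by omega) (by omega)]
            exact hpX
        rw [h1, h2]
        simp
      · have h1 : (Xf.filter (fun a => a.terminal = ((p : ℤ) : ZMod n) ∧ ¬ isInnerArc a)) = ∅ := by
          rw [Finset.eq_empty_iff_forall_notMem]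
          intro a ha
          obtain ⟨haf, hat, hai⟩ := Finset.mem_filter.1 ha
          cases a with
          | inner u s => exact absurd trivial hai
          | proj j =>
            apply hpX
            have : j = ((p : ℤ) : ZMod n) := hat
            rw [← this]
            exact (X_finite hn hX).mem_toFinset.1 haf
        have h2 : ((TF n X J).filter (fun c => c.1 = p ∧ c.2 = J + (n : ℤ) + 1)) = ∅ := by
          rw [Finset.eq_empty_iff_forall_notMem]
          intro c hc
          obtain ⟨hcT, hcp, hcP⟩ := Finset.mem_filter.1 hc
          apply hpX
          have := (mem_TF.1 hcT).2.2.2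
          rw [ArcOf_proj hcP, hcp] at this
          exact this
        rw [h1, h2]
        simp
  rw [← hsplit, hinner, hproj]
  push_cast
  ring

end CountEq
section SumCount
variable {n : ℕ} (hn : 0 < n) {X : Set (Arc n)} (hX : IsTriangulation n X) {J : ℤ}
  (hJ : Arc.proj ((J : ℤ) : ZMod n) ∈ X)

include hn hX hJ in
lemma sum_count (p q : ℤ) (hp : J ≤ p) (hpq : p ≤ q) (hq : q ≤ J + (n : ℤ)) :
    ∑ j ∈ Finset.Ioc p q, ((topSeq n X ((j : ℤ) : ZMod n)) : ℤ)
      = ((TF n X J).filter (fun c => p < c.2 ∧ c.2 ≤ q)).card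
        + ((TF n X J).filter (fun c => c.2 = J + (n : ℤ) + 1 ∧ p < c.1 ∧ c.1 ≤ q)).card
        + (if p < J + (n : ℤ) ∧ J + (n : ℤ) ≤ q then 1 else 0) := by
  classical
  have hsum : ∑ j ∈ Finset.Ioc p q, ((topSeq n X ((j : ℤ) : ZMod n)) : ℤ)
      = ∑ j ∈ Finset.Ioc p q, (((((TF n X J).filter (fun c => c.2 = j)).card : ℤ)
          + (((TF n X J).filter (fun c => c.1 = j ∧ c.2 = J + (n : ℤ) + 1)).card : ℤ))
          + (if j = J + (n : ℤ) then (1 : ℤ) else 0)) := by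
    refine Finset.sum_congr rfl (fun j hj => ?_)
    have hj' := Finset.mem_Ioc.1 hj
    have := count_eq hn hX hJ j (by omega) (by omega)
    omega
  rw [hsum, Finset.sum_add_distrib, Finset.sum_add_distrib]
  congr 1
  · congr 1
    · -- fiberwise on c.2
      have hfib := Finset.card_eq_sum_card_fiberwise
        (f := fun c : ℤ × ℤ => c.2) (s := (TF n X J).filter (fun c => p < c.2 ∧ c.2 ≤ q))
        (t := Finset.Ioc p q) (fun c hc => by
          have := (Finset.mem_filter.1 hc).2
          exact Finset.mem_Ioc.2 ⟨this.1, this.2⟩)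
      have : ∑ j ∈ Finset.Ioc p q, (((TF n X J).filter (fun c => c.2 = j)).card)
          = ((TF n X J).filter (fun c => p < c.2 ∧ c.2 ≤ q)).card := by
        rw [hfib]
        refine Finset.sum_congr rfl (fun j hj => ?_)
        have hj' := Finset.mem_Ioc.1 hj
        congr 1
        rw [Finset.filter_filter]
        apply Finset.filter_congr
        intro c hc
        constructor
        · intro h; exact ⟨⟨by omega, by omega⟩, h⟩
        · intro h; exact h.2
      rw [← this]
      push_cast
      rfl
    · -- fiberwise on c.1 over fans
      have hfib := Finset.card_eq_sum_card_fiberwise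
        (f := fun c : ℤ × ℤ => c.1)
        (s := (TF n X J).filter (fun c => c.2 = J + (n : ℤ) + 1 ∧ p < c.1 ∧ c.1 ≤ q))
        (t := Finset.Ioc p q) (fun c hc => by
          have := (Finset.mem_filter.1 hc).2
          exact Finset.mem_Ioc.2 ⟨this.2.1, this.2.2⟩)
      have : ∑ j ∈ Finset.Ioc p q, (((TF n X J).filter
            (fun c => c.1 = j ∧ c.2 = J + (n : ℤ) + 1)).card)
          = ((TF n X J).filter (fun c => c.2 = J + (n : ℤ) + 1 ∧ p < c.1 ∧ c.1 ≤ q)).card := by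
        rw [hfib]
        refine Finset.sum_congr rfl (fun j hj => ?_)
        have hj' := Finset.mem_Ioc.1 hj
        congr 1
        rw [Finset.filter_filter]
        apply Finset.filter_congr
        intro c hc
        constructor
        · intro h; exact ⟨⟨h.2, by omega, by omega⟩, h.1⟩
        · intro h; exact ⟨h.2, h.1.1⟩
      rw [← this]
      push_cast
      rfl
  · rw [Finset.sum_ite_eq' (Finset.Ioc p q) (J + (n : ℤ)) (fun _ => (1 : ℤ))]
    simp only [Finset.mem_Ioc]

end SumCount

section Arith
variable {n : ℕ} (hn : 0 < n) {X : Set (Arc n)} (hX : IsTriangulation n X) {J : ℤ}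
  (hJ : Arc.proj ((J : ℤ) : ZMod n) ∈ X)

include hn in
lemma resRep_bounds (p : ℤ) : 1 ≤ resRep n p ∧ resRep n p ≤ n := by
  unfold resRep
  have h1 := Int.emod_nonneg (p - 1) (show (n : ℤ) ≠ 0 by omega)
  have h2 := Int.emod_lt_of_pos (p - 1) (show (0 : ℤ) < n by omega)
  omega

lemma resRep_congr {p q : ℤ} (h : (n : ℤ) ∣ p - q) : resRep n p = resRep n q := by
  obtain ⟨c, hc⟩ := h
  have h2 : (p - 1) % (n : ℤ) = (q - 1) % (n : ℤ) := by
    have : p - 1 = (q - 1) + (n : ℤ) * c := by omega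
    rw [this, Int.add_mul_emod_self_left]
  unfold resRep
  rw [h2]

include hn in
lemma resRep_self {m : ℕ} (h1 : 1 ≤ m) (h2 : m ≤ n) : resRep n (m : ℤ) = m := by
  unfold resRep
  rw [Int.emod_eq_of_lt (by omega) (by omega)]
  omega

include hn in
lemma dvd_resRep (p : ℤ) : (n : ℤ) ∣ (resRep n p : ℤ) - p := by
  have hne : (n : ℤ) ≠ 0 := by omega
  have hmod := Int.emod_def (p - 1) (n : ℤ)
  have hnn : (0 : ℤ) ≤ (p - 1) % (n : ℤ) := Int.emod_nonneg _ hne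
  refine ⟨-((p - 1) / (n : ℤ)), ?_⟩
  unfold resRep
  push_cast
  rw [Int.toNat_of_nonneg hnn]
  linear_combination hmod

lemma natCast_ZMod_eq_intCast (m : ℕ) : ((m : ℕ) : ZMod n) = ((m : ℤ) : ZMod n) := by
  push_cast; rfl

include hn in
lemma cast_resRep (p : ℤ) : (((resRep n p : ℕ)) : ZMod n) = ((p : ℤ) : ZMod n) := by
  rw [natCast_ZMod_eq_intCast, intCast_eq_iff_dvd]
  exact dvd_resRep hn p

lemma psum_congr (a : ZMod n → ℕ) {p q : ℤ} (h : (n : ℤ) ∣ p - q) :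
    psum n a p = psum n a q := by
  unfold psum
  rw [resRep_congr h]

end Arith
section Arith2
variable {n : ℕ} (hn : 0 < n) {X : Set (Arc n)} (hX : IsTriangulation n X) {J : ℤ}
  (hJ : Arc.proj ((J : ℤ) : ZMod n) ∈ X)

include hn hX hJ in
lemma sum_a_eq_n : ∑ j ∈ Finset.Icc 1 n, ((topSeq n X ((j : ℕ) : ZMod n)) : ℤ) = n := by
  classical
  haveI : NeZero n := ⟨hn.ne'⟩
  have step1 : ∑ j ∈ Finset.Icc 1 n, ((topSeq n X ((j : ℕ) : ZMod n)) : ℤ)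
      = ∑ p : ZMod n, ((topSeq n X p) : ℤ) := by
    apply Finset.sum_nbij' (i := fun (j : ℕ) => ((j : ℕ) : ZMod n))
      (j := fun (p : ZMod n) => if p.val = 0 then n else p.val)
    · intro j _; exact Finset.mem_univ _
    · intro p _
      rw [Finset.mem_Icc]
      have := ZMod.val_lt p
      split_ifs <;> omega
    · intro j hj
      have hj' := Finset.mem_Icc.1 hj
      have hv : ((j : ℕ) : ZMod n).val = j % n := ZMod.val_natCast n j
      rw [hv]
      rcases eq_or_lt_of_le hj'.2 with h | h
      · subst h; simp
      · have hlt := Nat.mod_eq_of_lt h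
        rw [if_neg (by omega)]
        omega
    · intro p _
      split_ifs with h
      · rw [ZMod.natCast_self]
        exact ((ZMod.val_eq_zero p).1 h).symm
      · rw [ZMod.natCast_val, ZMod.cast_id]
    · intro j _; rfl
  have step2 : ∑ p : ZMod n, ((topSeq n X p) : ℤ)
      = (((X_finite hn hX).toFinset.card : ℤ)) := by
    have hfib := Finset.card_eq_sum_card_fiberwise
      (f := fun a : Arc n => a.terminal) (s := (X_finite hn hX).toFinset)
      (t := Finset.univ) (fun a _ => Finset.mem_univ _)
    rw [hfib]
    push_cast
    refine Finset.sum_congr rfl (fun p _ => ?_)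
    rw [topSeq_eq hn hX]
  rw [step1, step2, card_X_eq hn hX hJ]

include hn hX hJ in
lemma tot_zero : ∑ j ∈ Finset.Icc 1 n, (((topSeq n X ((j : ℕ) : ZMod n)) : ℤ) - 1) = 0 := by
  rw [Finset.sum_sub_distrib, sum_a_eq_n hn hX hJ]
  simp [Nat.card_Icc]

include hn hX hJ in
lemma psum_succ (p : ℤ) :
    psum n (topSeq n X) (p + 1)
      = psum n (topSeq n X) p + ((topSeq n X ((p + 1 : ℤ) : ZMod n)) : ℤ) - 1 := by
  have hr := resRep_bounds hn p
  have hdvd := dvd_resRep hn p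
  by_cases hrn : resRep n p = n
  · have h1 : resRep n (p + 1) = 1 := by
      have : resRep n (p + 1) = resRep n ((1 : ℕ) : ℤ) := by
        apply resRep_congr
        have : (n : ℤ) ∣ p := by
          have h' := hdvd; rw [hrn] at h'
          obtain ⟨c, hc⟩ := h'
          exact ⟨1 - c, by push_cast at hc ⊢; linear_combination -hc⟩
        obtain ⟨c, hc⟩ := this
        exact ⟨c, by push_cast; linear_combination hc⟩
      rw [this, resRep_self hn le_rfl hn]
    have h2 : psum n (topSeq n X) p = 0 := by
      unfold psum
      rw [hrn]
      exact tot_zero hn hX hJ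
    have hcast : (((1 : ℕ)) : ZMod n) = ((p + 1 : ℤ) : ZMod n) := by
      rw [natCast_ZMod_eq_intCast, intCast_eq_iff_dvd]
      have : (n : ℤ) ∣ p := by
        have h' := hdvd; rw [hrn] at h'
        obtain ⟨c, hc⟩ := h'
        exact ⟨1 - c, by push_cast at hc ⊢; linear_combination -hc⟩
      obtain ⟨c, hc⟩ := this
      exact ⟨-c, by push_cast; linear_combination -hc⟩
    have h3 : psum n (topSeq n X) (p + 1) = ((topSeq n X ((p + 1 : ℤ) : ZMod n)) : ℤ) - 1 := by
      unfold psum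
      rw [h1, Finset.Icc_self, Finset.sum_singleton, hcast]
    omega
  · have h1 : resRep n (p + 1) = resRep n p + 1 := by
      have heq : resRep n (p + 1) = resRep n ((resRep n p + 1 : ℕ) : ℤ) := by
        apply resRep_congr
        obtain ⟨c, hc⟩ := hdvd
        exact ⟨-c, by push_cast; linear_combination -hc⟩
      rw [heq, resRep_self hn (by omega) (by omega)]
    unfold psum
    rw [h1, Finset.sum_Icc_succ_top (by omega : 1 ≤ resRep n p + 1)]
    have : (((resRep n p + 1 : ℕ)) : ZMod n) = ((p + 1 : ℤ) : ZMod n) := by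
      rw [natCast_ZMod_eq_intCast, intCast_eq_iff_dvd]
      obtain ⟨c, hc⟩ := hdvd
      exact ⟨c, by push_cast; linear_combination hc⟩
    rw [this]
    ring

include hn hX hJ in
lemma psum_sub {p q : ℤ} (h : p ≤ q) :
    psum n (topSeq n X) q - psum n (topSeq n X) p
      = ∑ j ∈ Finset.Ioc p q, (((topSeq n X ((j : ℤ) : ZMod n)) : ℤ) - 1) := by
  obtain ⟨k, hk⟩ : ∃ k : ℕ, q = p + k := ⟨(q - p).toNat, by omega⟩
  subst hk
  clear h
  induction k with
  | zero => simp
  | succ k ih =>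
    have e1 : (p + ((k + 1 : ℕ) : ℤ)) = (p + (k : ℕ)) + 1 := by push_cast; ring
    rw [e1]
    have hins : Finset.Ioc p (p + (k : ℕ) + 1)
        = insert (p + (k : ℕ) + 1) (Finset.Ioc p (p + (k : ℕ))) := by
      ext x
      simp only [Finset.mem_Ioc, Finset.mem_insert]
      omega
    rw [hins, Finset.sum_insert (by simp only [Finset.mem_Ioc]; omega)]
    have hk2 := psum_succ hn hX hJ (p + (k : ℕ))
    omega

end Arith2
section Levels
variable {n : ℕ} (hn : 0 < n) {X : Set (Arc n)} (hX : IsTriangulation n X) {J : ℤ}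
  (hJ : Arc.proj ((J : ℤ) : ZMod n) ∈ X)

include hn hX hJ in
lemma psum_diff (p q : ℤ) (hp : J ≤ p) (hpq : p ≤ q) (hq : q ≤ J + (n : ℤ)) :
    psum n (topSeq n X) q - psum n (topSeq n X) p
      = (((TF n X J).filter (fun c => p < c.2 ∧ c.2 ≤ q)).card : ℤ)
        + (((TF n X J).filter (fun c => c.2 = J + (n : ℤ) + 1 ∧ p < c.1 ∧ c.1 ≤ q)).card : ℤ)
        + (if p < J + (n : ℤ) ∧ J + (n : ℤ) ≤ q then 1 else 0) - (q - p) := by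
  rw [psum_sub hn hX hJ hpq, Finset.sum_sub_distrib, sum_count hn hX hJ p q hp hpq hq]
  have hcard : ((Finset.Ioc p q).card : ℤ) = q - p := by
    rw [Int.card_Ioc]
    omega
  rw [Finset.sum_const]
  simp only [nsmul_eq_mul, mul_one]
  omega

-- generic filter partition
lemma card_filter_split {α : Type*} (F : Finset α) (P Q : α → Prop)
    [DecidablePred P] [DecidablePred Q] :
    (F.filter P).card
      = (F.filter (fun a => P a ∧ Q a)).card + (F.filter (fun a => P a ∧ ¬ Q a)).card := by
  classical
  have := Finset.card_filter_add_card_filter_not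
    (s := F.filter P) (p := Q)
  rw [Finset.filter_filter, Finset.filter_filter] at this
  omega

/-- the folded-down family used for level estimates at position `p` -/
noncomputable def Gp (n : ℕ) (X : Set (Arc n)) (J p : ℤ) : Finset (ℤ × ℤ) :=
  ((TF n X J).filter
      (fun c => c.2 ≤ p ∨ (c.2 = J + (n : ℤ) + 1 ∧ c.1 ≤ p - 1))).image
    (fun c => if c.2 = J + (n : ℤ) + 1 then (c.1, p + 1) else c)

variable (p : ℤ) (hp1 : J < p) (hp2 : p < J + (n : ℤ))

include hp2 in
lemma Gp_card :
    ((Gp n X J p).card : ℤ)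
      = (((TF n X J).filter (fun c => c.2 ≤ p)).card : ℤ)
        + (((TF n X J).filter
            (fun c => c.2 = J + (n : ℤ) + 1 ∧ c.1 ≤ p - 1)).card : ℤ) := by
  classical
  unfold Gp
  rw [Finset.card_image_of_injOn, Finset.filter_or, Finset.card_union_of_disjoint]
  · push_cast; ring
  · rw [Finset.disjoint_left]
    intro c h1 h2
    have ha1 := (Finset.mem_filter.1 h1).2
    have ha2 := (Finset.mem_filter.1 h2).2
    have hb := mem_TF.1 (Finset.mem_filter.1 h1).1
    obtain ⟨x1, x2, x3, _⟩ := hb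
    omega
  · intro c hc d hd h
    simp only [Finset.coe_filter, Set.mem_setOf_eq] at hc hd
    obtain ⟨hcT, hcor⟩ := hc
    obtain ⟨hdT, hdor⟩ := hd
    have hbc := mem_TF.1 hcT
    have hbd := mem_TF.1 hdT
    dsimp only at h
    by_cases hcP : c.2 = J + (n : ℤ) + 1 <;> by_cases hdP : d.2 = J + (n : ℤ) + 1
    · rw [if_pos hcP, if_pos hdP] at h
      have h1 : c.1 = d.1 := (Prod.ext_iff.1 h).1
      exact Prod.ext h1 (hcP.trans hdP.symm)
    · rw [if_pos hcP, if_neg hdP] at h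
      have h2 : p + 1 = d.2 := (Prod.ext_iff.1 h).2
      obtain ⟨x1, x2, x3, _⟩ := hbd
      omega
    · rw [if_neg hcP, if_pos hdP] at h
      have h2 : c.2 = p + 1 := (Prod.ext_iff.1 h).2
      obtain ⟨x1, x2, x3, _⟩ := hbc
      omega
    · rw [if_neg hcP, if_neg hdP] at h
      exact h

include hn hX hJ hp1 in
lemma Gp_val : ∀ c ∈ Gp n X J p, J ≤ c.1 ∧ c.1 + 2 ≤ c.2 ∧ c.2 ≤ p + 1 := by
  intro c hc
  unfold Gp at hc
  rw [Finset.mem_image] at hc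
  obtain ⟨d, hd, rfl⟩ := hc
  obtain ⟨hdT, hdor⟩ := Finset.mem_filter.1 hd
  obtain ⟨h1, h2, h3, _⟩ := mem_TF.1 hdT
  try dsimp only
  by_cases hdP : d.2 = J + (n : ℤ) + 1
  · rw [if_pos hdP]
    rcases hdor with h | h
    · omega
    · exact ⟨h1, by omega, le_refl _⟩
  · rw [if_neg hdP]
    rcases hdor with h | h
    · exact ⟨h1, h2, by omega⟩
    · omega

include hn hX hJ in
lemma Gp_nc : ∀ c ∈ Gp n X J p, ∀ d ∈ Gp n X J p, ¬ Cross c d := by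
  intro c hc d hd hcr
  unfold Gp at hc hd
  rw [Finset.mem_image] at hc hd
  obtain ⟨c', hc', rfl⟩ := hc
  obtain ⟨d', hd', rfl⟩ := hd
  obtain ⟨hcT, hcor⟩ := Finset.mem_filter.1 hc'
  obtain ⟨hdT, hdor⟩ := Finset.mem_filter.1 hd'
  obtain ⟨hc1, hc2, hc3, _⟩ := mem_TF.1 hcT
  obtain ⟨hd1, hd2, hd3, _⟩ := mem_TF.1 hdT
  have hncd := TF_noncross hn hX hJ c' hcT d' hdT
  simp only [Cross] at hncd
  try dsimp only at hcr
  by_cases hcP : c'.2 = J + (n : ℤ) + 1 <;> by_cases hdP : d'.2 = J + (n : ℤ) + 1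
  · rw [if_pos hcP, if_pos hdP] at hcr
    simp only [Cross] at hcr
    omega
  · rw [if_pos hcP, if_neg hdP] at hcr
    simp only [Cross] at hcr
    omega
  · rw [if_neg hcP, if_pos hdP] at hcr
    simp only [Cross] at hcr
    omega
  · rw [if_neg hcP, if_neg hdP] at hcr
    simp only [Cross] at hcr
    omega

include hn hX hJ hp1 in
lemma Gp_ear : ((J : ℤ), p + 1) ∈ Gp n X J p := by
  unfold Gp
  rw [Finset.mem_image]
  refine ⟨((J : ℤ), J + (n : ℤ) + 1), ?_, ?_⟩
  · rw [Finset.mem_filter]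
    exact ⟨ear_mem hn hX hJ, Or.inr ⟨rfl, by omega⟩⟩
  · try dsimp only
    rw [if_pos rfl]

include hn hX hJ hp1 hp2 in
lemma psum_diff_J :
    psum n (topSeq n X) p - psum n (topSeq n X) J
      = ((Gp n X J p).card : ℤ) - 1
        + (if ((p, J + (n : ℤ) + 1) ∈ TF n X J) then 1 else 0) - (p - J) := by
  classical
  have hdiff := psum_diff hn hX hJ J p (le_refl J) (by omega) (by omega)
  rw [if_neg (by omega)] at hdiff
  -- identify the two second-coordinate filters
  have e1 : (TF n X J).filter (fun c => J < c.2 ∧ c.2 ≤ p)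
      = (TF n X J).filter (fun c => c.2 ≤ p) := by
    apply Finset.filter_congr
    intro c hc
    obtain ⟨w1, w2, w3, _⟩ := mem_TF.1 hc
    constructor
    · intro h; exact h.2
    · intro h; exact ⟨by omega, h⟩
  -- fan filters bookkeeping
  have e2 : ((TF n X J).filter
        (fun c => c.2 = J + (n : ℤ) + 1 ∧ c.1 ≤ p - 1)).card
      = 1 + ((TF n X J).filter
        (fun c => c.2 = J + (n : ℤ) + 1 ∧ J < c.1 ∧ c.1 ≤ p - 1)).card := by
    have hsplit := card_filter_split (TF n X J)
      (fun c => c.2 = J + (n : ℤ) + 1 ∧ c.1 ≤ p - 1) (fun c => J < c.1)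
    have hear : (TF n X J).filter
        (fun c => (c.2 = J + (n : ℤ) + 1 ∧ c.1 ≤ p - 1) ∧ ¬ J < c.1)
        = {((J : ℤ), J + (n : ℤ) + 1)} := by
      ext c
      rw [Finset.mem_filter, Finset.mem_singleton]
      constructor
      · rintro ⟨hcT, ⟨h1, h2⟩, h3⟩
        obtain ⟨w1, w2, w3, _⟩ := mem_TF.1 hcT
        exact Prod.ext (by omega) h1
      · rintro rfl
        exact ⟨ear_mem hn hX hJ, ⟨rfl, by omega⟩, by omega⟩
    have heq : (TF n X J).filter
        (fun c => (c.2 = J + (n : ℤ) + 1 ∧ c.1 ≤ p - 1) ∧ J < c.1)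
        = (TF n X J).filter
        (fun c => c.2 = J + (n : ℤ) + 1 ∧ J < c.1 ∧ c.1 ≤ p - 1) := by
      apply Finset.filter_congr
      intro c hc
      constructor
      · rintro ⟨⟨h1, h2⟩, h3⟩; exact ⟨h1, h3, h2⟩
      · rintro ⟨h1, h2, h3⟩; exact ⟨⟨h1, h3⟩, h2⟩
    rw [heq, hear] at hsplit
    simp only [Finset.card_singleton] at hsplit
    omega
  have e3 : (((TF n X J).filter
        (fun c => c.2 = J + (n : ℤ) + 1 ∧ J < c.1 ∧ c.1 ≤ p)).card : ℤ)
      = (((TF n X J).filter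
        (fun c => c.2 = J + (n : ℤ) + 1 ∧ J < c.1 ∧ c.1 ≤ p - 1)).card : ℤ)
        + (if ((p, J + (n : ℤ) + 1) ∈ TF n X J) then 1 else 0) := by
    have hsplit := card_filter_split (TF n X J)
      (fun c => c.2 = J + (n : ℤ) + 1 ∧ J < c.1 ∧ c.1 ≤ p) (fun c => c.1 ≤ p - 1)
    have heq2 : (TF n X J).filter
        (fun c => (c.2 = J + (n : ℤ) + 1 ∧ J < c.1 ∧ c.1 ≤ p) ∧ c.1 ≤ p - 1)
        = (TF n X J).filter
        (fun c => c.2 = J + (n : ℤ) + 1 ∧ J < c.1 ∧ c.1 ≤ p - 1) := by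
      apply Finset.filter_congr
      intro c hc
      constructor
      · rintro ⟨⟨h1, h2, h3⟩, h4⟩; exact ⟨h1, h2, h4⟩
      · rintro ⟨h1, h2, h3⟩; exact ⟨⟨h1, h2, by omega⟩, h3⟩
    have hfan : (TF n X J).filter
        (fun c => (c.2 = J + (n : ℤ) + 1 ∧ J < c.1 ∧ c.1 ≤ p) ∧ ¬ c.1 ≤ p - 1)
        = if ((p, J + (n : ℤ) + 1) ∈ TF n X J) then {(p, J + (n : ℤ) + 1)} else ∅ := by
      split_ifs with hfm
      · ext c
        rw [Finset.mem_filter, Finset.mem_singleton]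
        constructor
        · rintro ⟨hcT, ⟨h1, h2, h3⟩, h4⟩
          exact Prod.ext (by omega) h1
        · rintro rfl
          exact ⟨hfm, ⟨rfl, by omega, le_refl _⟩, by omega⟩
      · rw [Finset.eq_empty_iff_forall_notMem]
        intro c hc
        obtain ⟨hcT, ⟨h1, h2, h3⟩, h4⟩ := Finset.mem_filter.1 hc
        have hcp : c = (p, J + (n : ℤ) + 1) := Prod.ext (by omega) h1
        exact hfm (hcp ▸ hcT)
    rw [heq2, hfan] at hsplit
    split_ifs at hsplit ⊢ with h
    · rw [Finset.card_singleton] at hsplit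
      push_cast
      omega
    · rw [Finset.card_empty] at hsplit
      push_cast
      omega
  rw [e1] at hdiff
  rw [Gp_card p hp2, e2]
  push_cast at hdiff e3 ⊢
  omega

end Levels
section Levels2
variable {n : ℕ} (hn : 0 < n) {X : Set (Arc n)} (hX : IsTriangulation n X) {J : ℤ}
  (hJ : Arc.proj ((J : ℤ) : ZMod n) ∈ X)

include hn hX hJ in
lemma psum_le_level (p : ℤ) (hp1 : J < p) (hp2 : p < J + (n : ℤ)) :
    psum n (topSeq n X) p ≤ psum n (topSeq n X) J - 1
      + (if ((p, J + (n : ℤ) + 1) ∈ TF n X J) then 1 else 0) := by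
  have hd := psum_diff_J hn hX hJ p hp1 hp2
  have hb := card_le_noncross' J (p + 1) (by omega) (Gp n X J p)
    (Gp_val hn hX hJ p hp1) (Gp_nc hn hX hJ p)
  omega

include hn hX hJ in
lemma psum_ge_level (p : ℤ) (hp1 : J < p) (hp2 : p < J + (n : ℤ))
    (hfan : (p, J + (n : ℤ) + 1) ∈ TF n X J) :
    psum n (topSeq n X) J ≤ psum n (topSeq n X) p := by
  classical
  have hd := psum_diff_J hn hX hJ p hp1 hp2
  rw [if_pos hfan] at hd
  have hsat : ∀ c : ℤ × ℤ, J ≤ c.1 → c.1 + 2 ≤ c.2 → c.2 ≤ p + 1 →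
      (∀ d ∈ Gp n X J p, ¬ Cross c d) → c ∈ Gp n X J p := by
    intro c h1 h2 h3 hncg
    by_cases hc2 : c.2 ≤ p
    · have hcT : c ∈ TF n X J := by
        apply TF_sat hn hX hJ c h1 h2 (by omega)
        intro d hd hcr
        obtain ⟨hd1, hd2, hd3, _⟩ := mem_TF.1 hd
        by_cases hdin : d.2 ≤ p ∨ (d.2 = J + (n : ℤ) + 1 ∧ d.1 ≤ p - 1)
        · refine hncg (if d.2 = J + (n : ℤ) + 1 then (d.1, p + 1) else d) ?_ ?_
          · unfold Gp
            rw [Finset.mem_image]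
            exact ⟨d, Finset.mem_filter.2 ⟨hd, hdin⟩, rfl⟩
          · by_cases hdP : d.2 = J + (n : ℤ) + 1
            · rw [if_pos hdP]
              simp only [Cross] at hcr ⊢
              omega
            · rw [if_neg hdP]
              exact hcr
        · push_neg at hdin
          obtain ⟨hdp, hdi⟩ := hdin
          by_cases hdP : d.2 = J + (n : ℤ) + 1
          · have := hdi hdP
            simp only [Cross] at hcr
            omega
          · have hfd := TF_noncross hn hX hJ d hd _ hfan
            simp only [Cross] at hfd hcr
            omega
      unfold Gp
      rw [Finset.mem_image]
      refine ⟨c, Finset.mem_filter.2 ⟨hcT, Or.inl hc2⟩, ?_⟩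
      rw [if_neg (by omega)]
    · have hc2' : c.2 = p + 1 := by omega
      have hcT : (c.1, J + (n : ℤ) + 1) ∈ TF n X J := by
        apply TF_sat hn hX hJ (c.1, J + (n : ℤ) + 1) (by dsimp only; omega)
          (by dsimp only; omega) (by dsimp only; omega)
        intro d hd hcr
        obtain ⟨hd1, hd2, hd3, _⟩ := mem_TF.1 hd
        by_cases hdin : d.2 ≤ p ∨ (d.2 = J + (n : ℤ) + 1 ∧ d.1 ≤ p - 1)
        · refine hncg (if d.2 = J + (n : ℤ) + 1 then (d.1, p + 1) else d) ?_ ?_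
          · unfold Gp
            rw [Finset.mem_image]
            exact ⟨d, Finset.mem_filter.2 ⟨hd, hdin⟩, rfl⟩
          · by_cases hdP : d.2 = J + (n : ℤ) + 1
            · rw [if_pos hdP]
              simp only [Cross] at hcr ⊢
              omega
            · rw [if_neg hdP]
              simp only [Cross] at hcr ⊢
              omega
        · push_neg at hdin
          obtain ⟨hdp, hdi⟩ := hdin
          by_cases hdP : d.2 = J + (n : ℤ) + 1
          · have := hdi hdP
            simp only [Cross] at hcr
            omega
          · have hfd := TF_noncross hn hX hJ d hd _ hfan
            simp only [Cross] at hfd hcr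
            omega
      unfold Gp
      rw [Finset.mem_image]
      refine ⟨(c.1, J + (n : ℤ) + 1), Finset.mem_filter.2 ⟨hcT, Or.inr ⟨rfl, by omega⟩⟩, ?_⟩
      rw [if_pos rfl]
      exact Prod.ext rfl (by omega)
  have hb := card_ge_saturated' J (p + 1) (by omega) (Gp n X J p)
    (Gp_val hn hX hJ p hp1) (Gp_nc hn hX hJ p) (Gp_ear hn hX hJ p hp1) hsat
  omega

include hn hX hJ in
lemma psum_le_J (p : ℤ) : psum n (topSeq n X) p ≤ psum n (topSeq n X) J := by
  obtain ⟨j, hj1, hj2, hj3⟩ := exists_rep hn ((p : ℤ) : ZMod n) (J + 1)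
  have hpj : psum n (topSeq n X) p = psum n (topSeq n X) j := by
    apply psum_congr
    rw [← intCast_eq_iff_dvd]
    exact hj3.symm
  rw [hpj]
  rcases eq_or_lt_of_le (show j ≤ J + (n : ℤ) by omega) with h | h
  · have : psum n (topSeq n X) j = psum n (topSeq n X) J := by
      apply psum_congr
      exact ⟨1, by omega⟩
    omega
  · have := psum_le_level hn hX hJ j (by omega) h
    split_ifs at this <;> omega

include hn hX hJ in
lemma pnorm_eq : pnorm n (topSeq n X) = psum n (topSeq n X) J := by
  have hmem : psum n (topSeq n X) J
      ∈ ((fun i : ℕ => psum n (topSeq n X) (i : ℤ)) '' Set.Icc 1 n) := by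
    refine ⟨resRep n J, ?_, ?_⟩
    · have := resRep_bounds hn (p := J)
      exact ⟨this.1, this.2⟩
    · exact psum_congr _ (dvd_resRep hn J)
  have hub : ∀ x ∈ ((fun i : ℕ => psum n (topSeq n X) (i : ℤ)) '' Set.Icc 1 n),
      x ≤ psum n (topSeq n X) J := by
    rintro x ⟨i, _, rfl⟩
    exact psum_le_J hn hX hJ _
  unfold pnorm
  exact le_antisymm (csSup_le ⟨_, hmem⟩ hub) (le_csSup ⟨_, hub⟩ hmem)

include hn hX hJ in
lemma fan_of_psum_eq (p : ℤ) (hp1 : J < p) (hp2 : p < J + (n : ℤ))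
    (h : psum n (topSeq n X) p = psum n (topSeq n X) J) :
    (p, J + (n : ℤ) + 1) ∈ TF n X J := by
  have := psum_le_level hn hX hJ p hp1 hp2
  by_contra hf
  rw [if_neg hf] at this
  omega

include hn hX hJ in
lemma psum_eq_of_fan (p : ℤ) (hp1 : J < p) (hp2 : p < J + (n : ℤ))
    (hfan : (p, J + (n : ℤ) + 1) ∈ TF n X J) :
    psum n (topSeq n X) p = psum n (topSeq n X) J :=
  le_antisymm (psum_le_J hn hX hJ p) (psum_ge_level hn hX hJ p hp1 hp2 hfan)

include hn hX hJ in
lemma card_window {u v : ℤ} (huv : (u, v) ∈ TF n X J) (hv : v ≤ J + (n : ℤ)) :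
    (((TF n X J).filter (fun c => u ≤ c.1 ∧ c.2 ≤ v)).card : ℤ) = v - u - 1 := by
  classical
  obtain ⟨hu1, hu2, hu3, _⟩ := mem_TF.1 huv
  have hval : ∀ c ∈ (TF n X J).filter (fun c => u ≤ c.1 ∧ c.2 ≤ v),
      u ≤ c.1 ∧ c.1 + 2 ≤ c.2 ∧ c.2 ≤ v := by
    intro c hc
    obtain ⟨hcT, hcf⟩ := Finset.mem_filter.1 hc
    obtain ⟨w1, w2, w3, _⟩ := mem_TF.1 hcT
    exact ⟨hcf.1, w2, hcf.2⟩
  have hnc : ∀ c ∈ (TF n X J).filter (fun c => u ≤ c.1 ∧ c.2 ≤ v),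
      ∀ d ∈ (TF n X J).filter (fun c => u ≤ c.1 ∧ c.2 ≤ v), ¬ Cross c d := by
    intro c hc d hd
    exact TF_noncross hn hX hJ c (Finset.mem_filter.1 hc).1 d (Finset.mem_filter.1 hd).1
  have hle := card_le_noncross' u v (by omega) _ hval hnc
  have hge := card_ge_saturated' u v (by omega) _ hval hnc
    (Finset.mem_filter.2 ⟨huv, le_refl u, le_refl v⟩) ?_
  · omega
  · intro c h1 h2 h3 hncf
    have hcT : c ∈ TF n X J := by
      apply TF_sat hn hX hJ c (by omega) h2 (by omega)
      intro d hd hcr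
      by_cases hdin : u ≤ d.1 ∧ d.2 ≤ v
      · exact hncf d (Finset.mem_filter.2 ⟨hd, hdin⟩) hcr
      · obtain ⟨hd1, hd2, hd3, _⟩ := mem_TF.1 hd
        have ho1 := TF_noncross hn hX hJ d hd _ huv
        have ho2 := TF_noncross hn hX hJ _ huv d hd
        simp only [Cross] at ho1 ho2 hcr
        push_neg at hdin
        omega
    exact Finset.mem_filter.2 ⟨hcT, h1, h3⟩

end Levels2
section Final
variable {n : ℕ} (hn : 0 < n) {X : Set (Arc n)} (hX : IsTriangulation n X) {J : ℤ}
  (hJ : Arc.proj ((J : ℤ) : ZMod n) ∈ X)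

include hn hX hJ in
lemma window_le (u v : ℤ) (huv : u < v) :
    ((((TF n X J).filter (fun c => u ≤ c.1 ∧ c.2 ≤ v)).card : ℤ)) ≤ v - u - 1 := by
  apply card_le_noncross' u v huv
  · intro c hc
    obtain ⟨hcT, hcf⟩ := Finset.mem_filter.1 hc
    obtain ⟨w1, w2, w3, _⟩ := mem_TF.1 hcT
    exact ⟨hcf.1, w2, hcf.2⟩
  · intro c hc d hd
    exact TF_noncross hn hX hJ c (Finset.mem_filter.1 hc).1 d (Finset.mem_filter.1 hd).1

lemma window_split (u E : ℤ) :
    (((TF n X J).filter (fun c => u ≤ c.1 ∧ c.2 ≤ E)).card : ℤ)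
      = (((TF n X J).filter (fun c => u ≤ c.1 ∧ c.2 ≤ E - 1)).card : ℤ)
        + (((TF n X J).filter (fun c => u ≤ c.1 ∧ c.2 = E)).card : ℤ) := by
  classical
  have hsplit := card_filter_split (TF n X J)
    (fun c => u ≤ c.1 ∧ c.2 ≤ E) (fun c => c.2 ≤ E - 1)
  have e1 : (TF n X J).filter (fun c => (u ≤ c.1 ∧ c.2 ≤ E) ∧ c.2 ≤ E - 1)
      = (TF n X J).filter (fun c => u ≤ c.1 ∧ c.2 ≤ E - 1) := by
    apply Finset.filter_congr
    intro c _
    constructor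
    · rintro ⟨⟨h1, h2⟩, h3⟩; exact ⟨h1, h3⟩
    · rintro ⟨h1, h2⟩; exact ⟨⟨h1, by omega⟩, h2⟩
  have e2 : (TF n X J).filter (fun c => (u ≤ c.1 ∧ c.2 ≤ E) ∧ ¬ c.2 ≤ E - 1)
      = (TF n X J).filter (fun c => u ≤ c.1 ∧ c.2 = E) := by
    apply Finset.filter_congr
    intro c _
    constructor
    · rintro ⟨⟨h1, h2⟩, h3⟩; exact ⟨h1, by omega⟩
    · rintro ⟨h1, h2⟩; exact ⟨⟨h1, by omega⟩, by omega⟩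
  rw [e1, e2] at hsplit
  push_cast
  omega

include hn hX hJ in
lemma diff_eq (B E : ℤ) (hJB : J ≤ B) (hE : E ≤ J + (n : ℤ))
    (hnofan : ∀ f : ℤ, B < f → f < E → (f, J + (n : ℤ) + 1) ∉ TF n X J)
    (m : ℤ) (hm1 : B ≤ m) (hm2 : m ≤ E - 1) :
    psum n (topSeq n X) m - psum n (topSeq n X) B
      = (((TF n X J).filter (fun c => B < c.2 ∧ c.2 ≤ m)).card : ℤ) - (m - B) := by
  classical
  have hdiff := psum_diff hn hX hJ B m hJB hm1 (by omega)
  rw [if_neg (by omega)] at hdiff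
  have hfe : (TF n X J).filter (fun c => c.2 = J + (n : ℤ) + 1 ∧ B < c.1 ∧ c.1 ≤ m) = ∅ := by
    rw [Finset.eq_empty_iff_forall_notMem]
    intro c hc
    obtain ⟨hcT, h1, h2, h3⟩ := Finset.mem_filter.1 hc
    have hcc : c = (c.1, J + (n : ℤ) + 1) := Prod.ext rfl h1
    exact hnofan c.1 h2 (by omega) (hcc ▸ hcT)
  rw [hfe] at hdiff
  simp only [Finset.card_empty, Nat.cast_zero] at hdiff
  omega

end Final

/-- **Adachi, Lemma (newlem1)(2).** Let `X` be a triangulation of the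
punctured `n`-gon, `a := top(X)`, and let `k < l` be integers with
`2 ≤ l − k ≤ n` such that `a'_m < ‖a'‖` for every integer `m` with
`k + 1 ≤ m ≤ l − 1`. Then the inner arc `(k mod n, l − k)` belongs to `X` if
and only if: (a) `a'_m < a'_k` for every integer `m` with `k+1 ≤ m ≤ l−1`;
and (b) there exists an integer `s` with `1 ≤ s ≤ a_{(l)_n} − δ_l` and
`a'_k = a'_{l−1} + s`. -/
theorem inner_mem_iff (n : ℕ) (hn : 0 < n)
    (X : Set (Arc n)) (hX : IsTriangulation n X)
    (k l : ℤ) (hkl : k < l) (h2 : 2 ≤ l - k) (hln : l - k ≤ (n : ℤ))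
    (hmid : ∀ m : ℤ, k + 1 ≤ m → m ≤ l - 1 →
      psum n (topSeq n X) m < pnorm n (topSeq n X)) :
    Arc.inner ((k : ZMod n)) (l - k).toNat ∈ X ↔
      ((∀ m : ℤ, k + 1 ≤ m → m ≤ l - 1 →
          psum n (topSeq n X) m < psum n (topSeq n X) k) ∧
        ∃ s : ℤ, 1 ≤ s ∧
          s ≤ ((topSeq n X) ((l : ℤ) : ZMod n) : ℤ) - deltaInt n (topSeq n X) l ∧
          psum n (topSeq n X) k = psum n (topSeq n X) (l - 1) + s) := by
  classical
  haveI : NeZero n := ⟨hn.ne'⟩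
  obtain ⟨j₀, hj₀⟩ := exists_proj hn hX
  obtain ⟨J, hJdef⟩ : ∃ J : ℤ, J = (j₀.val : ℤ) := ⟨_, rfl⟩
  have hJ : Arc.proj ((J : ℤ) : ZMod n) ∈ X := by
    have hc : ((J : ℤ) : ZMod n) = j₀ := by
      rw [hJdef, ← natCast_ZMod_eq_intCast, ZMod.natCast_val, ZMod.cast_id]
    rwa [hc]
  obtain ⟨B, hB1, hB2, hB3⟩ := exists_rep hn ((k : ℤ) : ZMod n) J
  obtain ⟨E, hEdef⟩ : ∃ E : ℤ, E = B + (l - k) := ⟨_, rfl⟩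
  have hBk : (n : ℤ) ∣ B - k := (intCast_eq_iff_dvd _ _).1 hB3
  obtain ⟨w, hw⟩ := hBk
  have hcong : ∀ m m' : ℤ, m' - m = B - k → psum n (topSeq n X) m' = psum n (topSeq n X) m :=
    fun m m' h => psum_congr _ ⟨w, by omega⟩
  have hkB : psum n (topSeq n X) k = psum n (topSeq n X) B := (hcong k B (by omega)).symm
  have hl : psum n (topSeq n X) l = psum n (topSeq n X) E := (hcong l E (by omega)).symm
  have hl1 : psum n (topSeq n X) (l - 1) = psum n (topSeq n X) (E - 1) :=
    (hcong (l - 1) (E - 1) (by omega)).symm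
  have hJn : psum n (topSeq n X) (J + (n : ℤ)) = psum n (topSeq n X) J :=
    psum_congr _ ⟨1, by ring⟩
  have hNJ : pnorm n (topSeq n X) = psum n (topSeq n X) J := pnorm_eq hn hX hJ
  have hmid' : ∀ m : ℤ, B + 1 ≤ m → m ≤ E - 1 →
      psum n (topSeq n X) m < psum n (topSeq n X) J := by
    intro m hm1 hm2
    have h1 := hmid (m - (B - k)) (by omega) (by omega)
    rw [hNJ] at h1
    have h3 := hcong (m - (B - k)) m (by omega)
    omega
  have hE : E ≤ J + (n : ℤ) := by
    by_contra h
    push_neg at h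
    have := hmid' (J + (n : ℤ)) (by omega) (by omega)
    omega
  have harc : Arc.inner ((k : ZMod n)) (l - k).toNat
      = Arc.inner ((B : ℤ) : ZMod n) ((E - B).toNat) := by
    rw [hB3]
    have h5 : E - B = l - k := by omega
    rw [h5]
  have hBE : (Arc.inner ((k : ZMod n)) (l - k).toNat ∈ X) ↔ ((B, E) ∈ TF n X J) := by
    rw [harc]
    exact (mem_TF_inner hX hJ hB1 (by omega) hE).symm
  have haE : ((topSeq n X ((l : ℤ) : ZMod n)) : ℤ) = ((topSeq n X ((E : ℤ) : ZMod n)) : ℤ) := by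
    have hcast : ((l : ℤ) : ZMod n) = ((E : ℤ) : ZMod n) := by
      rw [intCast_eq_iff_dvd]
      exact ⟨-w, by push_cast at hw ⊢; linear_combination -hw - hEdef⟩
    rw [hcast]
  have hδ : deltaInt n (topSeq n X) l
      = if psum n (topSeq n X) E = psum n (topSeq n X) J then 1 else 0 := by
    unfold deltaInt
    rw [hl, hNJ]
  constructor
  · -- forward direction
    intro hmem
    have hBEm := hBE.1 hmem
    have hnofan : ∀ f : ℤ, B < f → f < E → (f, J + (n : ℤ) + 1) ∉ TF n X J := by
      intro f h1 h2' hf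
      have hx := TF_noncross hn hX hJ _ hBEm _ hf
      simp only [Cross] at hx
      try dsimp only at hx
      omega
    have hDE : ∀ m : ℤ, B ≤ m → m ≤ E - 1 →
        psum n (topSeq n X) m - psum n (topSeq n X) B
          = (((TF n X J).filter (fun c => B ≤ c.1 ∧ c.2 ≤ m)).card : ℤ) - (m - B) := by
      intro m hm1 hm2
      have hd := diff_eq hn hX hJ B E hB1 hE hnofan m hm1 hm2
      have hch : (TF n X J).filter (fun c => B < c.2 ∧ c.2 ≤ m)
          = (TF n X J).filter (fun c => B ≤ c.1 ∧ c.2 ≤ m) := by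
        apply Finset.filter_congr
        intro c hc
        obtain ⟨w1, w2, w3, _⟩ := mem_TF.1 hc
        have hx := TF_noncross hn hX hJ c hc _ hBEm
        simp only [Cross] at hx
        try dsimp only at hx
        constructor
        · rintro ⟨x1, x2⟩
          exact ⟨by omega, x2⟩
        · rintro ⟨x1, x2⟩
          exact ⟨by omega, x2⟩
      rw [hch] at hd
      exact hd
    constructor
    · intro m hm1 hm2
      have hq1 := hDE (m + (B - k)) (by omega) (by omega)
      have hq2 := window_le hn hX hJ B (m + (B - k)) (by omega)
      have hq3 := hcong m (m + (B - k)) (by omega)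
      omega
    · have hq1 := hDE (E - 1) (by omega) (by omega)
      have hwin := card_window hn hX hJ hBEm hE
      have hsp := window_split (n := n) (X := X) (J := J) B E
      have hq2 : 1 ≤ ((TF n X J).filter (fun c => B ≤ c.1 ∧ c.2 = E)).card :=
        Finset.card_pos.2 ⟨(B, E), Finset.mem_filter.2 ⟨hBEm, le_refl _, rfl⟩⟩
      have hcnt := count_eq hn hX hJ E (by omega) hE
      have hsubc := Finset.card_le_card (show
          ((TF n X J).filter (fun c => B ≤ c.1 ∧ c.2 = E))
            ⊆ ((TF n X J).filter (fun c => c.2 = E)) by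
        intro c hc
        obtain ⟨h1', h2'⟩ := Finset.mem_filter.1 hc
        exact Finset.mem_filter.2 ⟨h1', h2'.2⟩)
      refine ⟨(((TF n X J).filter (fun c => B ≤ c.1 ∧ c.2 = E)).card : ℤ), by exact_mod_cast hq2,
        ?_, ?_⟩
      · rw [haE, hδ]
        by_cases hδ1 : psum n (topSeq n X) E = psum n (topSeq n X) J
        · rw [if_pos hδ1]
          by_cases hEJn : E = J + (n : ℤ)
          · rw [if_pos hEJn] at hcnt
            omega
          · rw [if_neg hEJn] at hcnt
            have hfan := fan_of_psum_eq hn hX hJ E (by omega) (by omega) hδ1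
            have hfc : 1 ≤ ((TF n X J).filter
                (fun c => c.1 = E ∧ c.2 = J + (n : ℤ) + 1)).card :=
              Finset.card_pos.2 ⟨(E, J + (n : ℤ) + 1),
                Finset.mem_filter.2 ⟨hfan, rfl, rfl⟩⟩
            omega
        · rw [if_neg hδ1]
          split_ifs at hcnt <;> omega
      · rw [hkB, hl1]
        omega
  · -- backward direction
    rintro ⟨hA, s, hs1, hs2, hs3⟩
    rw [haE, hδ] at hs2
    rw [hkB, hl1] at hs3
    have hs2' : s ≤ ((topSeq n X ((E : ℤ) : ZMod n)) : ℤ) := by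
      split_ifs at hs2 <;> omega
    have hA' : ∀ m : ℤ, B + 1 ≤ m → m ≤ E - 1 →
        psum n (topSeq n X) m < psum n (topSeq n X) B := by
      intro m hm1 hm2
      have h1 := hA (m - (B - k)) (by omega) (by omega)
      have h3 := hcong (m - (B - k)) m (by omega)
      omega
    have hnofan : ∀ f : ℤ, B < f → f < E → (f, J + (n : ℤ) + 1) ∉ TF n X J := by
      intro f h1 h2' hf
      have hx1 := psum_eq_of_fan hn hX hJ f (by omega) (by omega) hf
      have hx2 := hmid' f (by omega) (by omega)
      omega
    apply hBE.2
    apply TF_sat hn hX hJ (B, E) (by try dsimp only; omega) (by try dsimp only; omega)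
      (by try dsimp only; omega)
    intro d hd hcr
    obtain ⟨hd1, hd2, hd3, _⟩ := mem_TF.1 hd
    simp only [Cross] at hcr
    try dsimp only at hcr
    by_cases hdP : d.2 = J + (n : ℤ) + 1
    · have hdd : (d.1, J + (n : ℤ) + 1) = d := Prod.ext rfl hdP.symm
      exact hnofan d.1 (by omega) (by omega) (hdd ▸ hd)
    · have hd3' : d.2 ≤ J + (n : ℤ) := by omega
      rcases hcr with hcr | hcr
      · -- type R : B < d.1 < E < d.2
        have hdiff2 := psum_diff hn hX hJ d.1 (E - 1) (by omega) (by omega) (by omega)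
        rw [if_neg (by omega)] at hdiff2
        have hfe : (TF n X J).filter
            (fun c => c.2 = J + (n : ℤ) + 1 ∧ d.1 < c.1 ∧ c.1 ≤ E - 1) = ∅ := by
          rw [Finset.eq_empty_iff_forall_notMem]
          intro c hc
          obtain ⟨hcT, x1, x2, x3⟩ := Finset.mem_filter.1 hc
          have hcc : c = (c.1, J + (n : ℤ) + 1) := Prod.ext rfl x1
          exact hnofan c.1 (by omega) (by omega) (hcc ▸ hcT)
        have hch : (TF n X J).filter (fun c => d.1 < c.2 ∧ c.2 ≤ E - 1)
            = (TF n X J).filter (fun c => d.1 ≤ c.1 ∧ c.2 ≤ E - 1) := by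
          apply Finset.filter_congr
          intro c hc
          obtain ⟨w1, w2, w3, _⟩ := mem_TF.1 hc
          have hx := TF_noncross hn hX hJ c hc d hd
          simp only [Cross] at hx
          constructor
          · rintro ⟨x1, x2⟩
            exact ⟨by omega, x2⟩
          · rintro ⟨x1, x2⟩
            exact ⟨by omega, x2⟩
        rw [hfe, hch] at hdiff2
        simp only [Finset.card_empty, Nat.cast_zero] at hdiff2
        have hfanE : ((TF n X J).filter
            (fun c => c.1 = E ∧ c.2 = J + (n : ℤ) + 1)).card = 0 := by
          rw [Finset.card_eq_zero, Finset.eq_empty_iff_forall_notMem]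
          intro c hc
          obtain ⟨hcT, x1, x2⟩ := Finset.mem_filter.1 hc
          have hcc : c = (E, J + (n : ℤ) + 1) := Prod.ext x1 x2
          have hx := TF_noncross hn hX hJ d hd c hcT
          rw [hcc] at hx
          simp only [Cross] at hx
          try dsimp only at hx
          omega
        have hcnt := count_eq hn hX hJ E (by omega) hE
        rw [if_neg (by omega), hfanE] at hcnt
        have hchE : (TF n X J).filter (fun c => c.2 = E)
            = (TF n X J).filter (fun c => d.1 ≤ c.1 ∧ c.2 = E) := by
          apply Finset.filter_congr
          intro c hc
          obtain ⟨w1, w2, w3, _⟩ := mem_TF.1 hc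
          have hx := TF_noncross hn hX hJ c hc d hd
          simp only [Cross] at hx
          constructor
          · rintro x1
            exact ⟨by omega, x1⟩
          · rintro ⟨x1, x2⟩
            exact x2
        rw [hchE] at hcnt
        have hsp := window_split (n := n) (X := X) (J := J) d.1 E
        have hwle := window_le hn hX hJ d.1 E (by omega)
        have hAu := hA' d.1 (by omega) (by omega)
        omega
      · -- type L : d.1 < B < d.2 < E
        have hdq := diff_eq hn hX hJ B E hB1 hE hnofan d.2 (by omega) (by omega)
        have hd' : (d.1, d.2) ∈ TF n X J := hd
        have hwin := card_window hn hX hJ hd' hd3'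
        have hsplit3 := card_filter_split (TF n X J)
          (fun c => d.1 ≤ c.1 ∧ c.2 ≤ d.2) (fun c => c.2 ≤ B)
        have he1 : (TF n X J).filter (fun c => (d.1 ≤ c.1 ∧ c.2 ≤ d.2) ∧ c.2 ≤ B)
            = (TF n X J).filter (fun c => d.1 ≤ c.1 ∧ c.2 ≤ B) := by
          apply Finset.filter_congr
          intro c _
          constructor
          · rintro ⟨⟨x1, x2⟩, x3⟩; exact ⟨x1, x3⟩
          · rintro ⟨x1, x2⟩; exact ⟨⟨x1, by omega⟩, x2⟩
        have hb2 := window_le hn hX hJ d.1 B (by omega)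
        have hsubc := Finset.card_le_card (show
            (TF n X J).filter (fun c => (d.1 ≤ c.1 ∧ c.2 ≤ d.2) ∧ ¬ c.2 ≤ B)
              ⊆ (TF n X J).filter (fun c => B < c.2 ∧ c.2 ≤ d.2) by
          intro c hc
          obtain ⟨hcT, ⟨x1, x2⟩, x3⟩ := Finset.mem_filter.1 hc
          exact Finset.mem_filter.2 ⟨hcT, by omega, x2⟩)
        have hAv := hA' d.2 (by omega) (by omega)
        rw [he1] at hsplit3
        omega

end Punctured
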